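/- arXiv:math/0112148 — 11 statements merged into one kernel-verified Lean document; each statement's English description precedes it below -/
import Mathlib

section
/- Let K be a commutative ring, ∂ : K → K a derivation, and F a unit of K. Then for all f, g ∈ K and all natural numbers i, j one has F^{i+j+1} · ( j·(g·F^{−j})·(F^{−1}·∂(f·F^{−i})) − i·(f·F^{−i})·(F^{−1}·∂(g·F^{−j})) ) = j·g·∂f − i·f·∂g. (This expresses that the Poisson bracket {ω,ω′}_α on rational differentials is independent of the choice of the nonzero differential α: replacing α by β = F·α replaces the dual derivation ∂ by F^{−1}·∂ and the coordinate f of a degree-i differential by f·F^{−i}.) -/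
private lemma deriv_pow_inv {K : Type*} [CommRing K] (D : Derivation ℤ K K)
    (a u : K) (h : a * u = 1) (n : ℕ) :
    D (u ^ n) = (n : K) * u ^ n * (a * D u) := by
  induction n with
  | zero => simp
  | succ n ih =>
    rw [pow_succ, Derivation.leibniz, smul_eq_mul, smul_eq_mul, ih]
    push_cast
    linear_combination (-(u ^ n * D u)) * h

/-- independence of the Poisson bracket on rational differentials
on the choice of the trivializing differential `α`.  Replacing `α` by `β = F·α`
replaces the dual derivation `D` by `F⁻¹·D` and the coordinate `f` of a
degree-`i` differential by `f·F⁻ⁱ`. -/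
theorem bracket_independent_of_trivialization
    {K : Type*} [CommRing K] (D : Derivation ℤ K K) (F : Kˣ) (f g : K) (i j : ℕ) :
    (F : K) ^ (i + j + 1) *
      ((j : K) * (g * (↑F⁻¹ : K) ^ j) * ((↑F⁻¹ : K) * D (f * (↑F⁻¹ : K) ^ i)) -
       (i : K) * (f * (↑F⁻¹ : K) ^ i) * ((↑F⁻¹ : K) * D (g * (↑F⁻¹ : K) ^ j))) =
    (j : K) * g * D f - (i : K) * f * D g := by
  set a : K := (F : K)
  set u : K := (↑F⁻¹ : K)
  have h : a * u = 1 := by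
    simp [a, u, ← Units.val_mul]
  have hpow : a ^ (i + j + 1) * u ^ (i + j + 1) = 1 := by
    rw [← mul_pow, h, one_pow]
  rw [Derivation.leibniz, Derivation.leibniz, smul_eq_mul, smul_eq_mul,
    smul_eq_mul, smul_eq_mul, deriv_pow_inv D a u h i, deriv_pow_inv D a u h j]
  linear_combination ((j : K) * g * D f - (i : K) * f * D g) * hpow +
    ((j : K) * (i : K) * f * g * a ^ (i + j + 1) * u ^ (i + j + 1) * D u -
     (i : K) * (j : K) * f * g * a ^ (i + j + 1) * u ^ (i + j + 1) * D u) * h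
end

section
/- Let K be a commutative ring with a derivation ∂, and define β(i,f,j,g) := j·g·∂f − i·f·∂g for f, g ∈ K and natural numbers i, j. Then: (antisymmetry) β(i,f,j,g) = −β(j,g,i,f); (Leibniz rule) β(i,f,j+k,g·h) = g·β(i,f,k,h) + h·β(i,f,j,g) for all h ∈ K and k ∈ ℕ; (Jacobi identity) β(i+j+1, β(i,f,j,g), k, h) + β(j+k+1, β(j,g,k,h), i, f) + β(k+i+1, β(k,h,i,f), j, g) = 0. (Thus β defines a Poisson bracket of degree 1 on the graded algebra ⊕_{i≥0} K of differentials.) -/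
/-- The degree-1 Poisson bracket of the paper: on an `i`-differential `f` and a
`j`-differential `g` (trivialized by the differential dual to the derivation `D`),
`β(i,f,j,g) = j·g·D f − i·f·D g`, regarded as an `(i+j+1)`-differential. -/
def poissonBracket {K : Type*} [CommRing K] (D : Derivation ℤ K K)
    (i : ℕ) (f : K) (j : ℕ) (g : K) : K :=
  (j : K) * g * D f - (i : K) * f * D g

/-- `β` is antisymmetric, satisfies the Leibniz rule, and the Jacobi
identity (with the degree placement `deg β(i,f,j,g) = i+j+1`); thus it defines a
Poisson bracket of degree 1 on the graded algebra `⊕_{i≥0} K` of differentials. -/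
theorem poissonBracket_is_poisson
    {K : Type*} [CommRing K] (D : Derivation ℤ K K) (f g h : K) (i j k : ℕ) :
    poissonBracket D i f j g = - poissonBracket D j g i f ∧
    poissonBracket D i f (j + k) (g * h) =
      g * poissonBracket D i f k h + h * poissonBracket D i f j g ∧
    poissonBracket D (i + j + 1) (poissonBracket D i f j g) k h +
      poissonBracket D (j + k + 1) (poissonBracket D j g k h) i f +
      poissonBracket D (k + i + 1) (poissonBracket D k h i f) j g = 0 := by
  refine ⟨?_, ?_, ?_⟩ <;>
    simp only [poissonBracket, Derivation.leibniz, Derivation.map_sub,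
      Derivation.leibniz, Derivation.map_natCast, smul_eq_mul, Nat.cast_add, Nat.cast_one] <;> ring
end

section
/- Let K be a commutative ring with a derivation ∂, let d be a natural number, and define β(i,f,j,g) := j·g·∂f − i·f·∂g placed in degree i+j+d. Then for all f, g, h ∈ K and i, j, k ∈ ℕ: (antisymmetry) β(i,f,j,g) = −β(j,g,i,f); (Leibniz rule) β(i,f,j+k,g·h) = g·β(i,f,k,h) + h·β(i,f,j,g); (Jacobi identity) β(i+j+d, β(i,f,j,g), k, h) + β(j+k+d, β(j,g,k,h), i, f) + β(k+i+d, β(k,h,i,f), j, g) = 0. (Thus, as asserted in the paper for the elliptic case, for every integer d ≥ 0 the formula defines a Poisson structure of degree d on the graded algebra ⊕_{i≥0} K.) -/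
/-- for every natural number `d`, the bracket `β` (with degree placement
`deg β(i,f,j,g) = i+j+d`) is antisymmetric, satisfies the Leibniz rule and the
Jacobi identity; thus it defines a Poisson structure of degree `d` on the graded
algebra `⊕_{i≥0} K` (`d = 1` is the canonical-cone case, `d = 0` the
Feigin–Odesskii case). -/
theorem poissonBracket_degree_d_is_poisson
    {K : Type*} [CommRing K] (D : Derivation ℤ K K) (d : ℕ)
    (f g h : K) (i j k : ℕ) :
    poissonBracket D i f j g = - poissonBracket D j g i f ∧
    poissonBracket D i f (j + k) (g * h) =
      g * poissonBracket D i f k h + h * poissonBracket D i f j g ∧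
    poissonBracket D (i + j + d) (poissonBracket D i f j g) k h +
      poissonBracket D (j + k + d) (poissonBracket D j g k h) i f +
      poissonBracket D (k + i + d) (poissonBracket D k h i f) j g = 0 := by
  refine ⟨?_, ?_, ?_⟩
  · simp only [poissonBracket]; ring
  · simp only [poissonBracket, Derivation.leibniz, smul_eq_mul]
    push_cast
    ring
  · simp only [poissonBracket, map_sub, Derivation.leibniz, smul_eq_mul, Derivation.map_natCast]
    push_cast
    ring
end

section
/- Let R be a commutative ring with a derivation ∂. The set of sequences a : ℕ → R, equipped with the product (a*b)_k = ∑_{n+m+l=k} c(n,m)·a_n·∂^m(b_l) (where c(n,m) is the generalized binomial coefficient '−n choose m'), is an associative unital ring with unit e₀, and the map r ↦ r·e₀ is an injective ring homomorphism from R into it. (This is the statement that ΨDO(R,∂)_{≤0} is a ring.) -/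
/-- The generalized binomial coefficient `−n choose m`:
`c(0,0) = 1`, `c(0,m) = 0` for `m > 0`, `c(n,m) = (−1)^m · choose (n+m−1) m` for `n ≥ 1`. -/
def pdoCoeff (n m : ℕ) : ℤ := (-1) ^ m * (Nat.choose (n + m - 1) m : ℤ)

/-- The product of `ΨDO(R,∂)_{≤0}`, modeled on sequences `a : ℕ → R`
(`a` represents `∑_{n≥0} a_n D^{−n}`):
`(a*b)_k = ∑_{n+m+l=k} c(n,m)·a_n·∂^m(b_l)`. -/
def pdoMul {R : Type*} [CommRing R] (d : R → R) (a b : ℕ → R) : ℕ → R :=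
  fun k => ∑ n ∈ Finset.range (k + 1), ∑ m ∈ Finset.range (k + 1 - n),
    pdoCoeff n m • (a n * d^[m] (b (k - n - m)))

/-- The sequence `e₀` representing `1`. -/
def pdoOne {R : Type*} [CommRing R] : ℕ → R := fun n => if n = 0 then 1 else 0

/-- The sequence `r·e₀` representing the scalar `r ∈ R`. -/
def pdoScalar {R : Type*} [CommRing R] (r : R) : ℕ → R := fun n => if n = 0 then r else 0

namespace PdoAux

open Finset PowerSeries

/-! ### Combinatorial identities -/

/-- `Cp n m` is the coefficient of `x^m` in `(1-x)^{-n}`. -/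
def Cp (n m : ℕ) : ℕ := Nat.choose (n + m - 1) m

lemma pdoCoeff_eq (n m : ℕ) : pdoCoeff n m = (-1)^m * (Cp n m : ℤ) := rfl

lemma Cp_zero (m : ℕ) : Cp 0 m = if m = 0 then 1 else 0 := by
  cases m with
  | zero => rfl
  | succ m =>
      show Nat.choose (0 + (m+1) - 1) (m+1) = _
      rw [if_neg m.succ_ne_zero]
      exact Nat.choose_eq_zero_of_lt (by omega)

lemma Cp_succ (d m : ℕ) : Cp (d+1) m = Nat.choose (d + m) m := by
  show Nat.choose (d+1+m-1) m = _
  congr 1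
  omega

lemma coeff_invOneSubPow (n j : ℕ) :
    (PowerSeries.coeff (R := ℤ) j) (PowerSeries.invOneSubPow ℤ n).val = (Cp n j : ℤ) := by
  cases n with
  | zero =>
      rw [PowerSeries.invOneSubPow_zero, Units.val_one, PowerSeries.coeff_one, Cp_zero]
      split <;> simp_all
  | succ d =>
      rw [PowerSeries.invOneSubPow_val_succ_eq_mk_add_choose, PowerSeries.coeff_mk, Cp_succ]
      exact_mod_cast congrArg (Nat.cast (R := ℤ)) Nat.choose_symm_add

lemma Cp_vandermonde (a b t : ℕ) :
    ∑ j ∈ range (t+1), (Cp a j : ℤ) * (Cp b (t - j) : ℤ) = (Cp (a+b) t : ℤ) := by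
  have h : (invOneSubPow ℤ (a+b)).val = (invOneSubPow ℤ a).val * (invOneSubPow ℤ b).val := by
    rw [invOneSubPow_eq_inv_one_sub_pow, invOneSubPow_eq_inv_one_sub_pow,
      invOneSubPow_eq_inv_one_sub_pow, pow_add, Units.val_mul]
  have h2 := congrArg (PowerSeries.coeff (R := ℤ) t) h
  rw [PowerSeries.coeff_mul, Finset.Nat.sum_antidiagonal_eq_sum_range_succ_mk] at h2
  simp only [coeff_invOneSubPow] at h2
  exact h2.symm

lemma choose_mul_Cp (n m j : ℕ) :
    Nat.choose (m+j) m * Cp n (m+j) = Cp n m * Cp (n+m) j := by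
  cases n with
  | zero =>
      rcases Nat.eq_zero_or_pos m with hm | hm
      · subst hm; simp [Cp_zero]
      · rw [Cp_zero, Cp_zero]
        rw [if_neg (by omega), if_neg (by omega)]
        simp
  | succ d =>
      rw [Cp_succ, Cp_succ]
      have h1 : d + 1 + m = (d + m) + 1 := by omega
      rw [h1, Cp_succ]
      have h2 : d + (m + j) = d + m + j := by omega
      rw [h2]
      have h := Nat.choose_mul (n := d+m+j) (k := m+j) (s := j) (by omega)
      rw [Nat.add_sub_cancel, show m + j - j = m by omega] at h
      calc Nat.choose (m+j) m * Nat.choose (d+m+j) (m+j)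
          = Nat.choose (d+m+j) (m+j) * Nat.choose (m+j) j := by
            rw [← Nat.choose_symm_add, Nat.mul_comm]
        _ = Nat.choose (d+m) m * Nat.choose (d+m+j) j := by rw [h, Nat.mul_comm]

lemma pdoCoeff_key (n m l t : ℕ) :
    pdoCoeff n m * pdoCoeff (n+m+l) t =
      ∑ j ∈ range (t+1), (Nat.choose (m+j) m : ℤ) * (pdoCoeff n (m+j) * pdoCoeff l (t-j)) := by
  have hs : ∀ j ∈ range (t+1),
      (Nat.choose (m+j) m : ℤ) * (pdoCoeff n (m+j) * pdoCoeff l (t-j))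
        = (-1)^(m+t) * ((Cp n m : ℤ) * ((Cp (n+m) j : ℤ) * (Cp l (t-j) : ℤ))) := by
    intro j hj
    rw [mem_range] at hj
    rw [pdoCoeff_eq, pdoCoeff_eq]
    have h1 : ((m+j).choose m : ℤ) * (Cp n (m+j) : ℤ) = (Cp n m : ℤ) * (Cp (n+m) j : ℤ) := by
      exact_mod_cast congrArg (Nat.cast (R := ℤ)) (choose_mul_Cp n m j)
    have h2 : ((-1:ℤ))^(m+j) * (-1)^(t-j) = (-1)^(m+t) := by
      rw [← pow_add]; congr 1; omega
    calc (Nat.choose (m+j) m : ℤ) *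
          ((-1)^(m+j) * (Cp n (m+j) : ℤ) * ((-1)^(t-j) * (Cp l (t-j) : ℤ)))
        = ((-1:ℤ))^(m+j) * (-1)^(t-j) * (((m+j).choose m : ℤ) * (Cp n (m+j) : ℤ))
            * (Cp l (t-j) : ℤ) := by ring
      _ = (-1)^(m+t) * ((Cp n m : ℤ) * ((Cp (n+m) j : ℤ) * (Cp l (t-j) : ℤ))) := by
          rw [h1, h2]; ring
  rw [Finset.sum_congr rfl hs, ← Finset.mul_sum, ← Finset.mul_sum, Cp_vandermonde]
  rw [pdoCoeff_eq, pdoCoeff_eq]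
  have h3 : n + m + l = (n + m) + l := by omega
  rw [h3]
  ring

/-! ### Triangle reindexing lemmas -/

section Triangle
variable {β : Type*} [AddCommMonoid β]

lemma sum_triangle (K : ℕ) (f : ℕ → ℕ → β) :
    ∑ M ∈ range (K+1), ∑ i ∈ range (M+1), f M i
      = ∑ i ∈ range (K+1), ∑ j ∈ range (K+1-i), f (i+j) i := by
  rw [Finset.sum_sigma', Finset.sum_sigma']
  refine Finset.sum_nbij' (fun p => ⟨p.2, p.1 - p.2⟩) (fun p => ⟨p.1 + p.2, p.1⟩) ?_ ?_ ?_ ?_ ?_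
  · intro p hp; simp only [Finset.mem_sigma, mem_range] at *; omega
  · intro p hp; simp only [Finset.mem_sigma, mem_range] at *; omega
  · intro p hp; simp only [Finset.mem_sigma, mem_range] at hp
    ext <;> simp <;> omega
  · intro p hp; simp only [Finset.mem_sigma, mem_range] at hp
    ext <;> simp <;> omega
  · intro p hp; simp only [Finset.mem_sigma, mem_range] at hp
    have h : p.2 + (p.1 - p.2) = p.1 := by omega
    rw [h]

lemma sum_triangle_swap (K : ℕ) (f : ℕ → ℕ → β) :
    ∑ i ∈ range (K+1), ∑ j ∈ range (K+1-i), f i j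
      = ∑ j ∈ range (K+1), ∑ i ∈ range (K+1-j), f i j := by
  rw [Finset.sum_sigma', Finset.sum_sigma']
  refine Finset.sum_nbij' (fun p => ⟨p.2, p.1⟩) (fun p => ⟨p.2, p.1⟩) ?_ ?_ ?_ ?_ ?_
  · intro p hp; simp only [Finset.mem_sigma, mem_range] at *; omega
  · intro p hp; simp only [Finset.mem_sigma, mem_range] at *; omega
  · intro p _; rfl
  · intro p _; rfl
  · intro p _; rfl

end Triangle

/-! ### Iterated derivation lemmas -/

variable {R : Type*} [CommRing R] (D : Derivation ℤ R R)

lemma iter_add (M : ℕ) (x y : R) : (⇑D)^[M] (x + y) = (⇑D)^[M] x + (⇑D)^[M] y := by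
  induction M generalizing x y with
  | zero => rfl
  | succ M ih => simp only [Function.iterate_succ_apply, map_add, ih]

lemma iter_zero (M : ℕ) : (⇑D)^[M] (0:R) = 0 := by
  induction M with
  | zero => rfl
  | succ M ih => simp only [Function.iterate_succ_apply, map_zero, ih]

lemma iter_smul (M : ℕ) (z : ℤ) (x : R) : (⇑D)^[M] (z • x) = z • (⇑D)^[M] x := by
  induction M generalizing x with
  | zero => rfl
  | succ M ih => simp only [Function.iterate_succ_apply, Derivation.map_smul, ih]

lemma iter_sum {ι : Type*} (M : ℕ) (s : Finset ι) (f : ι → R) :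
    (⇑D)^[M] (∑ i ∈ s, f i) = ∑ i ∈ s, (⇑D)^[M] (f i) := by
  classical
  induction s using Finset.induction_on with
  | empty => simp [iter_zero]
  | insert _ _ h ih => rw [Finset.sum_insert h, Finset.sum_insert h, iter_add, ih]

lemma iter_one (M : ℕ) : (⇑D)^[M] (1:R) = if M = 0 then 1 else 0 := by
  cases M with
  | zero => rfl
  | succ M =>
      rw [Function.iterate_succ_apply, Derivation.map_one_eq_zero, iter_zero, if_neg (by omega)]

lemma iter_leibniz' (M : ℕ) (x y : R) :
    (⇑D)^[M] (x * y) =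
      ∑ k ∈ range (M+1), Nat.choose M k • ((⇑D)^[M-k] x * (⇑D)^[k] y) := by
  induction M with
  | zero => simp [Finset.range]
  | succ n IH =>
    calc
      (⇑D)^[n + 1] (x * y) =
          D (∑ k ∈ range (n+1), n.choose k • ((⇑D)^[n - k] x * (⇑D)^[k] y)) := by
        rw [Function.iterate_succ_apply', IH]
      _ = (∑ k ∈ range (n+1),
            n.choose k • ((⇑D)^[n - k + 1] x * (⇑D)^[k] y)) +
          ∑ k ∈ range (n+1),
            n.choose k • ((⇑D)^[n - k] x * (⇑D)^[k + 1] y) := by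
        rw [map_sum, ← Finset.sum_add_distrib]
        apply Finset.sum_congr rfl
        intro k _
        rw [map_nsmul, Derivation.leibniz, Function.iterate_succ_apply',
          Function.iterate_succ_apply']
        simp only [nsmul_eq_mul, smul_eq_mul]
        ring
      _ = (∑ k ∈ range (n+1),
                n.choose (k+1) • ((⇑D)^[n - k] x * (⇑D)^[k + 1] y)) +
              1 • ((⇑D)^[n + 1] x * (⇑D)^[0] y) +
            ∑ k ∈ range (n+1), n.choose k • ((⇑D)^[n - k] x * (⇑D)^[k + 1] y) := ?_
      _ = ((∑ k ∈ range (n+1), n.choose k • ((⇑D)^[n - k] x * (⇑D)^[k + 1] y)) +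
              ∑ k ∈ range (n+1),
                n.choose (k+1) • ((⇑D)^[n - k] x * (⇑D)^[k + 1] y)) +
            1 • ((⇑D)^[n + 1] x * (⇑D)^[0] y) := by
        rw [add_comm, add_assoc]
      _ = (∑ i ∈ range (n+1),
              (n + 1).choose (i + 1) • ((⇑D)^[n + 1 - (i + 1)] x * (⇑D)^[i + 1] y)) +
            1 • ((⇑D)^[n + 1] x * (⇑D)^[0] y) := by
        simp_rw [Nat.choose_succ_succ, Nat.succ_sub_succ, add_smul, Finset.sum_add_distrib]
      _ = ∑ k ∈ range (n+2),
            (n+1).choose k • ((⇑D)^[n+1 - k] x * (⇑D)^[k] y) := by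
        rw [Finset.sum_range_succ' _ (n+1), Nat.choose_zero_right, tsub_zero]
    congr
    refine (Finset.sum_range_succ' _ _).trans (congr_arg₂ (· + ·) ?_ ?_)
    · rw [Finset.sum_range_succ, Nat.choose_succ_self, zero_smul, add_zero]
      refine Finset.sum_congr rfl fun k hk => ?_
      rw [mem_range] at hk
      congr
      omega
    · rw [Nat.choose_zero_right, Nat.sub_zero]

lemma iter_leibniz (M : ℕ) (x y : R) :
    (⇑D)^[M] (x * y) =
      ∑ i ∈ range (M+1), Nat.choose M i • ((⇑D)^[i] x * (⇑D)^[M-i] y) := by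
  rw [mul_comm, iter_leibniz']
  exact Finset.sum_congr rfl fun k _ => by rw [mul_comm]

/-! ### Associativity -/

lemma part1 (a b c : ℕ → R) (k : ℕ) :
    pdoMul ⇑D (pdoMul ⇑D a b) c k
      = ∑ n ∈ range (k+1), ∑ m ∈ range (k+1-n), ∑ l ∈ range (k+1-n-m),
          ∑ t ∈ range (k+1-n-m-l),
          (pdoCoeff n m * pdoCoeff (n+m+l) t) •
            (a n * ((⇑D)^[m] (b l) * (⇑D)^[t] (c (k-n-m-l-t)))) := by
  calc pdoMul ⇑D (pdoMul ⇑D a b) c k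
      = ∑ p ∈ range (k+1), ∑ n ∈ range (p+1), ∑ m ∈ range (p+1-n),
          ∑ t ∈ range (k+1-p),
          (pdoCoeff n m * pdoCoeff p t) •
            ((a n * (⇑D)^[m] (b (p-n-m))) * (⇑D)^[t] (c (k-p-t))) := by
        simp only [pdoMul, Finset.sum_mul, Finset.smul_sum, smul_mul_assoc, smul_smul]
        refine Finset.sum_congr rfl fun p hp => ?_
        rw [Finset.sum_comm]
        refine Finset.sum_congr rfl fun n hn => ?_
        rw [Finset.sum_comm]
        refine Finset.sum_congr rfl fun m hm => Finset.sum_congr rfl fun t ht => ?_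
        rw [mul_comm (pdoCoeff p t)]
    _ = ∑ n ∈ range (k+1), ∑ u ∈ range (k+1-n), ∑ m ∈ range (u+1),
          ∑ t ∈ range (k+1-n-u),
          (pdoCoeff n m * pdoCoeff (n+u) t) •
            ((a n * (⇑D)^[m] (b (u-m))) * (⇑D)^[t] (c (k-n-u-t))) := by
        rw [sum_triangle k (fun p n => ∑ m ∈ range (p+1-n), ∑ t ∈ range (k+1-p),
          (pdoCoeff n m * pdoCoeff p t) •
            ((a n * (⇑D)^[m] (b (p-n-m))) * (⇑D)^[t] (c (k-p-t))))]
        refine Finset.sum_congr rfl fun n hn => Finset.sum_congr rfl fun u hu => ?_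
        rw [mem_range] at hn hu
        rw [show n+u+1-n = u+1 by omega, show k+1-(n+u) = k+1-n-u by omega]
        refine Finset.sum_congr rfl fun m hm => Finset.sum_congr rfl fun t ht => ?_
        rw [show n+u-n-m = u-m by omega, show k-(n+u)-t = k-n-u-t by omega]
    _ = _ := by
        refine Finset.sum_congr rfl fun n hn => ?_
        rw [mem_range] at hn
        rw [show k+1-n = (k-n)+1 by omega,
          sum_triangle (k-n) (fun u m => ∑ t ∈ range (k-n+1-u),
            (pdoCoeff n m * pdoCoeff (n+u) t) •
              ((a n * (⇑D)^[m] (b (u-m))) * (⇑D)^[t] (c (k-n-u-t))))]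
        refine Finset.sum_congr rfl fun m hm => ?_
        rw [mem_range] at hm
        refine Finset.sum_congr rfl fun l hl => ?_
        rw [mem_range] at hl
        rw [show k-n+1-(m+l) = k-n+1-m-l by omega]
        refine Finset.sum_congr rfl fun t ht => ?_
        rw [show m+l-m = l by omega, show k-n-(m+l)-t = k-n-m-l-t by omega,
          show n+(m+l) = n+m+l by omega, mul_assoc]

lemma part2 (a b c : ℕ → R) (k : ℕ) :
    pdoMul ⇑D a (pdoMul ⇑D b c) k
      = ∑ n ∈ range (k+1), ∑ m ∈ range (k+1-n), ∑ l ∈ range (k+1-n-m),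
          ∑ t ∈ range (k+1-n-m-l),
          (pdoCoeff n m * pdoCoeff (n+m+l) t) •
            (a n * ((⇑D)^[m] (b l) * (⇑D)^[t] (c (k-n-m-l-t)))) := by
  calc pdoMul ⇑D a (pdoMul ⇑D b c) k
      = ∑ n ∈ range (k+1), ∑ M ∈ range (k+1-n), ∑ l ∈ range (k-n-M+1),
          ∑ q ∈ range (k-n-M+1-l), ∑ i ∈ range (M+1),
          (pdoCoeff n M * (pdoCoeff l q * (Nat.choose M i : ℤ))) •
            (a n * ((⇑D)^[i] (b l) * (⇑D)^[M-i+q] (c (k-n-M-l-q)))) := by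
        simp only [pdoMul, iter_sum, iter_smul, iter_leibniz,
          ← Function.iterate_add_apply, Finset.mul_sum, Finset.smul_sum,
          mul_smul_comm, smul_smul, ← natCast_zsmul]
    _ = ∑ n ∈ range (k+1), ∑ M ∈ range (k+1-n), ∑ i ∈ range (M+1),
          ∑ l ∈ range (k-n-M+1), ∑ q ∈ range (k-n-M+1-l),
          (pdoCoeff n M * (pdoCoeff l q * (Nat.choose M i : ℤ))) •
            (a n * ((⇑D)^[i] (b l) * (⇑D)^[M-i+q] (c (k-n-M-l-q)))) := by
        refine Finset.sum_congr rfl fun n hn => Finset.sum_congr rfl fun M hM => ?_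
        have e : ∀ l ∈ range (k-n-M+1),
            (∑ q ∈ range (k-n-M+1-l), ∑ i ∈ range (M+1),
              (pdoCoeff n M * (pdoCoeff l q * (Nat.choose M i : ℤ))) •
                (a n * ((⇑D)^[i] (b l) * (⇑D)^[M-i+q] (c (k-n-M-l-q)))))
            = ∑ i ∈ range (M+1), ∑ q ∈ range (k-n-M+1-l),
              (pdoCoeff n M * (pdoCoeff l q * (Nat.choose M i : ℤ))) •
                (a n * ((⇑D)^[i] (b l) * (⇑D)^[M-i+q] (c (k-n-M-l-q)))) :=
          fun l _ => Finset.sum_comm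
        rw [Finset.sum_congr rfl e, Finset.sum_comm]
    _ = ∑ n ∈ range (k+1), ∑ m ∈ range (k-n+1), ∑ j ∈ range (k-n+1-m),
          ∑ l ∈ range (k-n-m-j+1), ∑ q ∈ range (k-n-m-j+1-l),
          (pdoCoeff n (m+j) * (pdoCoeff l q * (Nat.choose (m+j) m : ℤ))) •
            (a n * ((⇑D)^[m] (b l) * (⇑D)^[j+q] (c (k-n-m-j-l-q)))) := by
        refine Finset.sum_congr rfl fun n hn => ?_
        rw [mem_range] at hn
        rw [show k+1-n = k-n+1 by omega,
          sum_triangle (k-n) (fun M i => ∑ l ∈ range (k-n-M+1), ∑ q ∈ range (k-n-M+1-l),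
            (pdoCoeff n M * (pdoCoeff l q * (Nat.choose M i : ℤ))) •
              (a n * ((⇑D)^[i] (b l) * (⇑D)^[M-i+q] (c (k-n-M-l-q)))))]
        refine Finset.sum_congr rfl fun m hm => Finset.sum_congr rfl fun j hj => ?_
        rw [mem_range] at hm hj
        rw [show k-n-(m+j) = k-n-m-j by omega]
        refine Finset.sum_congr rfl fun l hl => Finset.sum_congr rfl fun q hq => ?_
        rw [show m+j-m = j by omega]
    _ = ∑ n ∈ range (k+1), ∑ m ∈ range (k-n+1), ∑ l ∈ range (k-n-m+1),
          ∑ j ∈ range (k-n-m+1-l), ∑ q ∈ range (k-n-m+1-j-l),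
          (pdoCoeff n (m+j) * (pdoCoeff l q * (Nat.choose (m+j) m : ℤ))) •
            (a n * ((⇑D)^[m] (b l) * (⇑D)^[j+q] (c (k-n-m-j-l-q)))) := by
        refine Finset.sum_congr rfl fun n hn => Finset.sum_congr rfl fun m hm => ?_
        rw [mem_range] at hn hm
        have e1 : ∀ j ∈ range (k-n+1-m),
            (∑ l ∈ range (k-n-m-j+1), ∑ q ∈ range (k-n-m-j+1-l),
              (pdoCoeff n (m+j) * (pdoCoeff l q * (Nat.choose (m+j) m : ℤ))) •
                (a n * ((⇑D)^[m] (b l) * (⇑D)^[j+q] (c (k-n-m-j-l-q)))))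
            = ∑ l ∈ range (k-n-m+1-j), ∑ q ∈ range (k-n-m+1-j-l),
              (pdoCoeff n (m+j) * (pdoCoeff l q * (Nat.choose (m+j) m : ℤ))) •
                (a n * ((⇑D)^[m] (b l) * (⇑D)^[j+q] (c (k-n-m-j-l-q)))) := by
          intro j hj
          rw [mem_range] at hj
          rw [show k-n-m-j+1 = k-n-m+1-j by omega]
        rw [Finset.sum_congr rfl e1, show k-n+1-m = k-n-m+1 by omega,
          sum_triangle_swap (k-n-m) (fun j l => ∑ q ∈ range (k-n-m+1-j-l),
            (pdoCoeff n (m+j) * (pdoCoeff l q * (Nat.choose (m+j) m : ℤ))) •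
              (a n * ((⇑D)^[m] (b l) * (⇑D)^[j+q] (c (k-n-m-j-l-q)))))]
    _ = ∑ n ∈ range (k+1), ∑ m ∈ range (k-n+1), ∑ l ∈ range (k-n-m+1),
          ∑ t ∈ range (k-n-m-l+1), ∑ j ∈ range (t+1),
          ((Nat.choose (m+j) m : ℤ) * (pdoCoeff n (m+j) * pdoCoeff l (t-j))) •
            (a n * ((⇑D)^[m] (b l) * (⇑D)^[t] (c (k-n-m-l-t)))) := by
        refine Finset.sum_congr rfl fun n hn => Finset.sum_congr rfl fun m hm =>
          Finset.sum_congr rfl fun l hl => ?_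
        rw [mem_range] at hn hm hl
        have e1 : ∀ j ∈ range (k-n-m+1-l),
            (∑ q ∈ range (k-n-m+1-j-l),
              (pdoCoeff n (m+j) * (pdoCoeff l q * (Nat.choose (m+j) m : ℤ))) •
                (a n * ((⇑D)^[m] (b l) * (⇑D)^[j+q] (c (k-n-m-j-l-q)))))
            = ∑ q ∈ range (k-n-m-l+1-j),
              ((Nat.choose (m+j) m : ℤ) * (pdoCoeff n (m+j) * pdoCoeff l (j+q-j))) •
                (a n * ((⇑D)^[m] (b l) * (⇑D)^[j+q] (c (k-n-m-l-(j+q))))) := by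
          intro j hj
          rw [mem_range] at hj
          rw [show k-n-m+1-j-l = k-n-m-l+1-j by omega]
          refine Finset.sum_congr rfl fun q hq => ?_
          rw [mem_range] at hq
          rw [show j+q-j = q by omega, show k-n-m-j-l-q = k-n-m-l-(j+q) by omega,
            show pdoCoeff n (m+j) * (pdoCoeff l q * (Nat.choose (m+j) m : ℤ))
              = (Nat.choose (m+j) m : ℤ) * (pdoCoeff n (m+j) * pdoCoeff l q) from by ring]
        rw [show k-n-m+1-l = k-n-m-l+1 by omega] at e1 ⊢
        rw [Finset.sum_congr rfl e1,
          ← sum_triangle (k-n-m-l) (fun t j =>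
            ((Nat.choose (m+j) m : ℤ) * (pdoCoeff n (m+j) * pdoCoeff l (t-j))) •
              (a n * ((⇑D)^[m] (b l) * (⇑D)^[t] (c (k-n-m-l-t)))))]
    _ = _ := by
        refine Finset.sum_congr rfl fun n hn => ?_
        rw [mem_range] at hn
        rw [show k-n+1 = k+1-n by omega]
        refine Finset.sum_congr rfl fun m hm => ?_
        rw [mem_range] at hm
        rw [show k-n-m+1 = k+1-n-m by omega]
        refine Finset.sum_congr rfl fun l hl => ?_
        rw [mem_range] at hl
        rw [show k-n-m-l+1 = k+1-n-m-l by omega]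
        refine Finset.sum_congr rfl fun t ht => ?_
        rw [← Finset.sum_smul, ← pdoCoeff_key]

/-! ### Easy facts -/

lemma pdoCoeff_zero_zero : pdoCoeff 0 0 = 1 := rfl

lemma pdoCoeff_right_zero (n : ℕ) : pdoCoeff n 0 = 1 := by simp [pdoCoeff]

lemma pdoCoeff_zero_left {m : ℕ} (h : m ≠ 0) : pdoCoeff 0 m = 0 := by
  obtain ⟨m, rfl⟩ := Nat.exists_eq_succ_of_ne_zero h
  unfold pdoCoeff
  rw [show 0 + (m+1) - 1 = m by omega, Nat.choose_eq_zero_of_lt (by omega)]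
  simp

lemma pdo_one_mul (a : ℕ → R) : pdoMul ⇑D pdoOne a = a := by
  funext k
  simp only [pdoMul]
  rw [Finset.sum_eq_single_of_mem 0 (by simp)]
  · rw [Finset.sum_eq_single_of_mem 0 (by simp)]
    · simp [pdoOne, pdoCoeff_zero_zero]
    · intro m _ hm0
      rw [pdoCoeff_zero_left hm0, zero_smul]
  · intro n _ hn0
    apply Finset.sum_eq_zero
    intro m _
    simp [pdoOne, hn0]

lemma pdo_mul_one (a : ℕ → R) : pdoMul ⇑D a pdoOne = a := by
  funext k
  simp only [pdoMul]
  rw [Finset.sum_eq_single_of_mem k (by simp)]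
  · rw [show k+1-k = 1 by omega, Finset.sum_range_one, show k - k - 0 = 0 by omega]
    simp [pdoOne, pdoCoeff_right_zero]
  · intro n hn hnk
    rw [mem_range] at hn
    apply Finset.sum_eq_zero
    intro m hm
    rw [mem_range] at hm
    by_cases h : k - n - m = 0
    · have h1 : (pdoOne (k-n-m) : R) = 1 := by rw [h]; rfl
      rw [h1, iter_one, if_neg (show ¬ m = 0 by omega), mul_zero, smul_zero]
    · have h1 : (pdoOne (k-n-m) : R) = 0 := by simp [pdoOne, h]
      rw [h1, iter_zero, mul_zero, smul_zero]

lemma pdo_right_distrib (a b c : ℕ → R) :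
    pdoMul ⇑D a (b + c) = pdoMul ⇑D a b + pdoMul ⇑D a c := by
  funext k
  simp only [pdoMul, Pi.add_apply, iter_add, mul_add, smul_add, Finset.sum_add_distrib]

lemma pdo_left_distrib (a b c : ℕ → R) :
    pdoMul ⇑D (a + b) c = pdoMul ⇑D a c + pdoMul ⇑D b c := by
  funext k
  simp only [pdoMul, Pi.add_apply, add_mul, smul_add, Finset.sum_add_distrib]

lemma pdo_scalar_mul (r s : R) :
    pdoScalar (r * s) = pdoMul ⇑D (pdoScalar r) (pdoScalar s) := by
  funext k
  simp only [pdoMul]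
  rw [Finset.sum_eq_single_of_mem 0 (by simp)]
  · rw [Finset.sum_eq_single_of_mem 0 (by simp)]
    · simp [pdoScalar, pdoCoeff_zero_zero]
    · intro m _ hm0
      rw [pdoCoeff_zero_left hm0, zero_smul]
  · intro n _ hn0
    apply Finset.sum_eq_zero
    intro m _
    simp [pdoScalar, hn0]

end PdoAux

/-- `ΨDO(R,∂)_{≤0}` is an associative unital ring with unit `e₀`, and
`r ↦ r·e₀` is an injective ring homomorphism from `R` into it. -/
theorem pdo_is_ring {R : Type*} [CommRing R] (D : Derivation ℤ R R) :
    (∀ a b c : ℕ → R, pdoMul ⇑D (pdoMul ⇑D a b) c = pdoMul ⇑D a (pdoMul ⇑D b c)) ∧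
    (∀ a b c : ℕ → R, pdoMul ⇑D a (b + c) = pdoMul ⇑D a b + pdoMul ⇑D a c) ∧
    (∀ a b c : ℕ → R, pdoMul ⇑D (a + b) c = pdoMul ⇑D a c + pdoMul ⇑D b c) ∧
    (∀ a : ℕ → R, pdoMul ⇑D pdoOne a = a) ∧
    (∀ a : ℕ → R, pdoMul ⇑D a pdoOne = a) ∧
    Function.Injective (pdoScalar (R := R)) ∧
    (∀ r s : R, pdoScalar (r + s) = pdoScalar r + pdoScalar s) ∧
    (∀ r s : R, pdoScalar (r * s) = pdoMul ⇑D (pdoScalar r) (pdoScalar s)) ∧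
    pdoScalar (1 : R) = pdoOne := by
  refine ⟨fun a b c => ?_, PdoAux.pdo_right_distrib D, PdoAux.pdo_left_distrib D,
    PdoAux.pdo_one_mul D, PdoAux.pdo_mul_one D, ?_, ?_, PdoAux.pdo_scalar_mul D, rfl⟩
  · funext k
    rw [PdoAux.part1, PdoAux.part2]
  · intro r s h
    simpa [pdoScalar] using congrFun h 0
  · intro r s
    funext n
    simp only [pdoScalar, Pi.add_apply]
    split <;> simp
end

section
/- Let R be a commutative ring with derivation ∂, and let a, b ∈ ΨDO(R,∂)_{≤0} satisfy a_n = 0 for all n < i and b_n = 0 for all n < j. Then the commutator a*b − b*a satisfies (a*b − b*a)_n = 0 for all n ≤ i+j, and (a*b − b*a)_{i+j+1} = j·b_j·∂(a_i) − i·a_i·∂(b_j). (This is the computation showing that the Poisson bracket induced on the associated graded of the filtered ring ΨDO(R,∂)_{≤0} coincides with the degree-1 bracket β(i,f,j,g) = j·g·∂f − i·f·∂g on differentials, so that the algebra of pseudodifferential operators of degree ≤ 0 quantizes the Poisson algebra of the canonical cone.) -/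
lemma pdoCoeff_zero_right (n : ℕ) : pdoCoeff n 0 = 1 := by
  simp [pdoCoeff]

lemma pdoCoeff_one_right (n : ℕ) : pdoCoeff n 1 = -(n : ℤ) := by
  simp [pdoCoeff, Nat.choose_one_right]

lemma pdoMul_low {R : Type*} [CommRing R] (d : R → R) (i j : ℕ) (a b : ℕ → R)
    (hd : d 0 = 0) (ha : ∀ n < i, a n = 0) (hb : ∀ n < j, b n = 0) (k : ℕ) (hk : k < i + j) :
    pdoMul d a b k = 0 := by
  unfold pdoMul
  apply Finset.sum_eq_zero
  intro n hn
  apply Finset.sum_eq_zero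
  intro m hm
  simp only [Finset.mem_range] at hn hm
  rcases lt_or_ge n i with h | h
  · simp [ha n h]
  · have : k - n - m < j := by omega
    simp [hb _ this, Function.iterate_fixed hd]

lemma pdoMul_top {R : Type*} [CommRing R] (d : R → R) (i j : ℕ) (a b : ℕ → R)
    (hd : d 0 = 0) (ha : ∀ n < i, a n = 0) (hb : ∀ n < j, b n = 0) :
    pdoMul d a b (i + j) = a i * b j := by
  unfold pdoMul
  rw [Finset.sum_eq_single i]
  · rw [Finset.sum_eq_single 0]
    · simp [pdoCoeff_zero_right]
    · intro m hm hm0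
      simp only [Finset.mem_range] at hm
      have : j - m < j := by omega
      simp [hb _ this, Function.iterate_fixed hd]
    · intro h
      simp only [Finset.mem_range] at h; omega
  · intro n hn hni
    apply Finset.sum_eq_zero
    intro m hm
    simp only [Finset.mem_range] at hn hm
    rcases lt_or_ge n i with h | h
    · simp [ha n h]
    · have : i + j - n - m < j := by omega
      simp [hb _ this, Function.iterate_fixed hd]
  · intro h
    simp only [Finset.mem_range] at h; omega

lemma pdoMul_succ {R : Type*} [CommRing R] (d : R → R) (i j : ℕ) (a b : ℕ → R)
    (hd : d 0 = 0) (ha : ∀ n < i, a n = 0) (hb : ∀ n < j, b n = 0) :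
    pdoMul d a b (i + j + 1) =
      a i * b (j + 1) + a (i + 1) * b j + (-(i : ℤ)) • (a i * d (b j)) := by
  unfold pdoMul
  have hsub : ({i, i + 1} : Finset ℕ) ⊆ Finset.range (i + j + 1 + 1) := by
    intro x hx
    simp only [Finset.mem_insert, Finset.mem_singleton] at hx
    simp only [Finset.mem_range]
    omega
  rw [← Finset.sum_subset hsub ?_]
  · rw [Finset.sum_pair (by omega : i ≠ i + 1)]
    have h1 : ∑ m ∈ Finset.range (i + j + 1 + 1 - i),
        pdoCoeff i m • (a i * d^[m] (b (i + j + 1 - i - m))) =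
        a i * b (j + 1) + (-(i : ℤ)) • (a i * d (b j)) := by
      have hsub2 : ({0, 1} : Finset ℕ) ⊆ Finset.range (i + j + 1 + 1 - i) := by
        intro x hx
        simp only [Finset.mem_insert, Finset.mem_singleton] at hx
        simp only [Finset.mem_range]
        omega
      rw [← Finset.sum_subset hsub2 ?_]
      · rw [Finset.sum_pair (by omega : (0:ℕ) ≠ 1)]
        have e0 : i + j + 1 - i - 0 = j + 1 := by omega
        have e1 : i + j + 1 - i - 1 = j := by omega
        rw [e0, e1, pdoCoeff_zero_right, pdoCoeff_one_right]
        simp [Function.iterate_one]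
      · intro m hm hm'
        simp only [Finset.mem_range] at hm
        simp only [Finset.mem_insert, Finset.mem_singleton] at hm'
        have : i + j + 1 - i - m < j := by omega
        simp [hb _ this, Function.iterate_fixed hd]
    have h2 : ∑ m ∈ Finset.range (i + j + 1 + 1 - (i + 1)),
        pdoCoeff (i + 1) m • (a (i + 1) * d^[m] (b (i + j + 1 - (i + 1) - m))) =
        a (i + 1) * b j := by
      rw [Finset.sum_eq_single 0]
      · have : i + j + 1 - (i + 1) - 0 = j := by omega
        rw [this, pdoCoeff_zero_right]
        simp
      · intro m hm hm0
        simp only [Finset.mem_range] at hm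
        have : j - m < j := by omega
        simp [hb _ this, Function.iterate_fixed hd]
      · intro h
        simp only [Finset.mem_range] at h; omega
    rw [h1, h2]
    ring
  · intro n hn hn'
    simp only [Finset.mem_range] at hn
    simp only [Finset.mem_insert, Finset.mem_singleton] at hn'
    apply Finset.sum_eq_zero
    intro m hm
    simp only [Finset.mem_range] at hm
    rcases lt_or_ge n i with h | h
    · simp [ha n h]
    · have : i + j + 1 - n - m < j := by omega
      simp [hb _ this, Function.iterate_fixed hd]

/-- if `a` vanishes in degrees `< i` and `b` vanishes in degrees `< j`,
then the commutator `a*b − b*a` vanishes in degrees `≤ i+j`, and in degree `i+j+1`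
it equals `j·b_j·∂(a_i) − i·a_i·∂(b_j)`.  (So the Poisson bracket induced on the
associated graded of `ΨDO(R,∂)_{≤0}` is the degree-1 bracket
`β(i,f,j,g) = j·g·∂f − i·f·∂g` on differentials.) -/
theorem pdo_commutator {R : Type*} [CommRing R] (D : Derivation ℤ R R)
    (i j : ℕ) (a b : ℕ → R)
    (ha : ∀ n < i, a n = 0) (hb : ∀ n < j, b n = 0) :
    (∀ n ≤ i + j, pdoMul ⇑D a b n - pdoMul ⇑D b a n = 0) ∧
    pdoMul ⇑D a b (i + j + 1) - pdoMul ⇑D b a (i + j + 1) =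
      (j : R) * b j * D (a i) - (i : R) * a i * D (b j) := by
  constructor
  · intro n hn
    rcases eq_or_lt_of_le hn with h | h
    · subst h
      rw [pdoMul_top ⇑D i j a b (map_zero D) ha hb]
      have := pdoMul_top ⇑D j i b a (map_zero D) hb ha
      rw [Nat.add_comm j i] at this
      rw [this]
      ring
    · rw [pdoMul_low ⇑D i j a b (map_zero D) ha hb n h,
        pdoMul_low ⇑D j i b a (map_zero D) hb ha n (by omega)]
      ring
  · rw [pdoMul_succ ⇑D i j a b (map_zero D) ha hb]
    have := pdoMul_succ ⇑D j i b a (map_zero D) hb ha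
    rw [Nat.add_comm j i] at this
    rw [this]
    simp only [zsmul_eq_mul, Int.cast_neg, Int.cast_natCast]
    ring
end

section
/- Let R be a commutative ring with derivation ∂, let f be a unit of R, and set ∂' := f·∂ (also a derivation of R). In ΨDO(R,∂')_{≤0} let u := e₁ *' (f·e₀) (the sequence representing D_{∂'}^{−1}·f = (f^{−1}·D_{∂'})^{−1}; explicitly u_n = (−1)^{n−1}·(∂')^{n−1}(f) for n ≥ 1 and u_0 = 0). Then: (i) for each n, the n-fold product u^{*'n} vanishes in degrees < n, so that for every a ∈ ΨDO(R,∂)_{≤0} the sum Φ(a) := ∑_{n≥0} (a_n·e₀) *' u^{*'n} has only finitely many nonzero contributions in each degree and defines an element of ΨDO(R,∂')_{≤0}; (ii) Φ : ΨDO(R,∂)_{≤0} → ΨDO(R,∂')_{≤0} is a bijective ring homomorphism with Φ(r·e₀) = r·e₀ for all r ∈ R and Φ(e₁) = u, and it preserves the filtration: a_n = 0 for all n < i implies Φ(a)_n = 0 for all n < i, with Φ(a)_i = a_i·f^i. -/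
/-- The sequence `e₁` representing `D⁻¹`. -/
def pdoE1 {R : Type*} [CommRing R] : ℕ → R := fun n => if n = 1 then 1 else 0

/-- `n`-fold `pdoMul`-power of a sequence. -/
def pdoPow {R : Type*} [CommRing R] (d : R → R) (a : ℕ → R) : ℕ → (ℕ → R)
  | 0 => pdoOne
  | n + 1 => pdoMul d a (pdoPow d a n)

/-- The derivation `∂' = f·∂`, as a function. -/
def dPrime {R : Type*} [CommRing R] (D : Derivation ℤ R R) (f : Rˣ) : R → R :=
  fun x => (f : R) * D x

/-- The element `u = e₁ *' (f·e₀)` of `ΨDO(R,∂')_{≤0}`, representing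
`D_{∂'}⁻¹·f = (f⁻¹·D_{∂'})⁻¹`. -/
def uElt {R : Type*} [CommRing R] (D : Derivation ℤ R R) (f : Rˣ) : ℕ → R :=
  pdoMul (dPrime D f) pdoE1 (pdoScalar (f : R))

/-- The map `Φ : ΨDO(R,∂)_{≤0} → ΨDO(R,∂')_{≤0}`,
`Φ(a) = ∑_{n≥0} (a_n·e₀) *' u^{*'n}`; in degree `k` only the terms with `n ≤ k`
contribute (by part (i) of the statement), so the sum may be truncated. -/
def pdoChange {R : Type*} [CommRing R] (D : Derivation ℤ R R) (f : Rˣ) (a : ℕ → R) : ℕ → R :=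
  fun k => ∑ n ∈ Finset.range (k + 1),
    pdoMul (dPrime D f) (pdoScalar (a n)) (pdoPow (dPrime D f) (uElt D f) n) k


/-! ### Auxiliary lemmas -/

section Coeff

lemma pdoCoeff_eq_choose (n m : ℕ) : pdoCoeff n m = Ring.choose (-(n:ℤ)) m := by
  rw [Ring.choose]
  show pdoCoeff n m = Int.multichoose _ m
  rcases le_or_gt (n + m) 1 with h | h
  · have hn : n ≤ 1 := by omega
    have hm : m ≤ 1 := by omega
    interval_cases n <;> interval_cases m <;> decide
  · have h1 : (-(n:ℤ) - m + 1) = Int.negSucc (n + m - 2) := by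
      rw [Int.negSucc_eq]; omega
    have h2 : n + m - 2 + 1 = n + m - 1 := by omega
    rw [h1, Int.multichoose, h2, pdoCoeff, Int.coe_negOnePow_natCast]

lemma pdoCoeff_zero : ∀ m, pdoCoeff 0 m = if m = 0 then 1 else 0
  | 0 => by decide
  | m+1 => by
    have : 0 + (m+1) - 1 = m := by omega
    simp [pdoCoeff, this, Nat.choose_succ_self]

lemma pdoCoeff_one (m : ℕ) : pdoCoeff 1 m = (-1)^m := by simp [pdoCoeff]

lemma pdoCoeff_trinomial (n i j : ℕ) :
    pdoCoeff n (i + j) * (Nat.choose (i+j) i : ℤ) = pdoCoeff n i * pdoCoeff (n+i) j := by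
  have := Ring.choose_smul_choose (-(n:ℤ)) (n := i+j) (k := i) (Nat.le_add_right i j)
  rw [nsmul_eq_mul] at this
  have h1 : (-(n:ℤ) - i) = -((n+i : ℕ) : ℤ) := by push_cast; ring
  rw [h1, Nat.add_sub_cancel_left] at this
  rw [pdoCoeff_eq_choose, pdoCoeff_eq_choose, pdoCoeff_eq_choose, mul_comm, this]

lemma pdoCoeff_vandermonde (a b J : ℕ) :
    ∑ q ∈ Finset.range (J+1), pdoCoeff a q * pdoCoeff b (J - q) = pdoCoeff (a+b) J := by
  have h := Ring.add_choose_eq (r := -(a:ℤ)) (s := -(b:ℤ)) J (Commute.all _ _)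
  have h1 : (-(a:ℤ) + -(b:ℤ)) = -((a+b : ℕ) : ℤ) := by push_cast; ring
  rw [h1, Finset.Nat.sum_antidiagonal_eq_sum_range_succ
    (fun i j => Ring.choose (-(a:ℤ)) i * Ring.choose (-(b:ℤ)) j)] at h
  rw [pdoCoeff_eq_choose, h]
  exact Finset.sum_congr rfl fun q hq => by rw [pdoCoeff_eq_choose, pdoCoeff_eq_choose]

lemma pdoCoeff_assoc (n i p J : ℕ) :
    ∑ q ∈ Finset.range (J+1),
      pdoCoeff n (i + (J - q)) * (Nat.choose (i + (J - q)) i : ℤ) * pdoCoeff p q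
      = pdoCoeff (n+i+p) J * pdoCoeff n i := by
  have h : ∀ q ∈ Finset.range (J+1),
      pdoCoeff n (i + (J - q)) * (Nat.choose (i + (J - q)) i : ℤ) * pdoCoeff p q
      = pdoCoeff n i * (pdoCoeff p q * pdoCoeff (n+i) (J - q)) := by
    intro q hq
    rw [pdoCoeff_trinomial n i (J - q)]; ring
  rw [Finset.sum_congr rfl h, ← Finset.mul_sum, pdoCoeff_vandermonde p (n+i) J,
    show p + (n+i) = n+i+p by ring]
  ring

end Coeff

section DerIter
variable {R : Type*} [CommRing R] (d : Derivation ℤ R R)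

lemma dIter_zero (m : ℕ) : (⇑d)^[m] 0 = 0 :=
  Function.iterate_fixed (by simp) m

lemma dIter_add (m : ℕ) (x y : R) : (⇑d)^[m] (x + y) = (⇑d)^[m] x + (⇑d)^[m] y := by
  induction m generalizing x y with
  | zero => simp
  | succ m ih => simp [Function.iterate_succ_apply, ih]

lemma dIter_neg (m : ℕ) (x : R) : (⇑d)^[m] (-x) = -(⇑d)^[m] x := by
  induction m generalizing x with
  | zero => simp
  | succ m ih => simp [Function.iterate_succ_apply, ih]

lemma dIter_sub (m : ℕ) (x y : R) : (⇑d)^[m] (x - y) = (⇑d)^[m] x - (⇑d)^[m] y := by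
  simp [sub_eq_add_neg, dIter_add, dIter_neg]

lemma dIter_zsmul (m : ℕ) (z : ℤ) (x : R) : (⇑d)^[m] (z • x) = z • (⇑d)^[m] x := by
  induction m generalizing x with
  | zero => simp
  | succ m ih =>
    rw [Function.iterate_succ_apply, Function.iterate_succ_apply,
      Derivation.map_smul_of_tower, ih]

lemma dIter_one (m : ℕ) : (⇑d)^[m + 1] (1 : R) = 0 := by
  rw [Function.iterate_succ_apply]
  simp [dIter_zero]

lemma dIter_sum {ι : Type*} (s : Finset ι) (g : ι → R) (m : ℕ) :
    (⇑d)^[m] (∑ i ∈ s, g i) = ∑ i ∈ s, (⇑d)^[m] (g i) := by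
  induction s using Finset.cons_induction with
  | empty => simp [dIter_zero]
  | cons i s his ih => rw [Finset.sum_cons, dIter_add, ih, Finset.sum_cons]

lemma dIter_mul (m : ℕ) (x y : R) : (⇑d)^[m] (x * y) =
    ∑ i ∈ Finset.range (m + 1), m.choose i • ((⇑d)^[i] x * (⇑d)^[m - i] y) := by
  induction m with
  | zero => simp
  | succ m ih =>
    rw [Function.iterate_succ_apply', ih, map_sum]
    have step : ∀ i ∈ Finset.range (m+1), d (m.choose i • ((⇑d)^[i] x * (⇑d)^[m-i] y))
        = m.choose i • ((⇑d)^[i+1] x * (⇑d)^[m-i] y)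
          + m.choose i • ((⇑d)^[i] x * (⇑d)^[m+1-i] y) := by
      intro i hi
      simp only [Finset.mem_range] at hi
      have hmi : m + 1 - i = (m - i) + 1 := by omega
      rw [hmi, Derivation.map_smul_of_tower, Derivation.leibniz, smul_eq_mul, smul_eq_mul,
        Function.iterate_succ_apply', Function.iterate_succ_apply', smul_add]
      ring_nf
    rw [Finset.sum_congr rfl step, Finset.sum_add_distrib]
    rw [Finset.sum_range_succ' (fun i => (m+1).choose i • ((⇑d)^[i] x * (⇑d)^[m+1-i] y)) (m+1)]
    have e1 : ∀ i ∈ Finset.range (m+1), (m+1).choose (i+1) • ((⇑d)^[i+1] x * (⇑d)^[m+1-(i+1)] y)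
        = m.choose i • ((⇑d)^[i+1] x * (⇑d)^[m-i] y)
          + m.choose (i+1) • ((⇑d)^[i+1] x * (⇑d)^[m-i] y) := by
      intro i hi
      rw [Nat.succ_sub_succ, Nat.choose_succ_succ', add_smul]
    rw [Finset.sum_congr rfl e1, Finset.sum_add_distrib]
    have e2 : ∑ i ∈ Finset.range (m+1), m.choose (i+1) • ((⇑d)^[i+1] x * (⇑d)^[m-i] y)
        = ∑ i ∈ Finset.range (m+1), m.choose i • ((⇑d)^[i] x * (⇑d)^[m+1-i] y)
          - m.choose 0 • ((⇑d)^[0] x * (⇑d)^[m+1] y) := by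
      rw [Finset.sum_range_succ' (fun i => m.choose i • ((⇑d)^[i] x * (⇑d)^[m+1-i] y)) m]
      have h3 : ∀ i ∈ Finset.range m, m.choose (i+1) • ((⇑d)^[i+1] x * (⇑d)^[m+1-(i+1)] y)
          = m.choose (i+1) • ((⇑d)^[i+1] x * (⇑d)^[m-i] y) := by
        intro i hi; rw [Nat.succ_sub_succ]
      rw [Finset.sum_congr rfl h3, Finset.sum_range_succ
        (fun i => m.choose (i+1) • ((⇑d)^[i+1] x * (⇑d)^[m-i] y)) m]
      simp
    rw [e2]
    have e3 : (m+1).choose 0 • ((⇑d)^[0] x * (⇑d)^[m+1-0] y)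
        = m.choose 0 • ((⇑d)^[0] x * (⇑d)^[m+1] y) := by norm_num
    rw [e3]
    abel

end DerIter

section Tri

open Finset

def triF (k : ℕ) : Finset (ℕ × ℕ) :=
  (range (k+1) ×ˢ range (k+1)).filter (fun t => t.1 + t.2 ≤ k)

lemma mem_triF {k : ℕ} {t : ℕ × ℕ} : t ∈ triF k ↔ t.1 + t.2 ≤ k := by
  simp only [triF, mem_filter, mem_product, mem_range]
  omega

lemma sum_tri {M : Type*} [AddCommMonoid M] (k : ℕ) (g : ℕ → ℕ → M) :
    ∑ n ∈ range (k+1), ∑ m ∈ range (k+1-n), g n m = ∑ t ∈ triF k, g t.1 t.2 := by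
  rw [triF, sum_filter, sum_product]
  refine sum_congr rfl fun n hn => ?_
  rw [← sum_filter]
  refine (sum_congr ?_ fun m hm => rfl).symm
  ext m
  simp only [mem_filter, mem_range]
  simp only [mem_range] at *
  omega

lemma pdoMul_tri {R : Type*} [CommRing R] (d : R → R) (a b : ℕ → R) (k : ℕ) :
    pdoMul d a b k
      = ∑ t ∈ triF k, pdoCoeff t.1 t.2 • (a t.1 * d^[t.2] (b (k - t.1 - t.2))) := by
  rw [pdoMul, sum_tri]

end Tri

section Assoc

open Finset

variable {R : Type*} [CommRing R]

def quadF (k : ℕ) : Finset (ℕ × ℕ × ℕ × ℕ) :=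
  (range (k+1) ×ˢ range (k+1) ×ˢ range (k+1) ×ˢ range (k+1)).filter
    (fun t => t.1 + t.2.1 + t.2.2.1 + t.2.2.2 ≤ k)

lemma mem_quadF {k : ℕ} {t : ℕ × ℕ × ℕ × ℕ} :
    t ∈ quadF k ↔ t.1 + t.2.1 + t.2.2.1 + t.2.2.2 ≤ k := by
  simp only [quadF, mem_filter, mem_product, mem_range]
  omega

/-- canonical 4-index normal form of a triple product -/
def quadSum (d : R → R) (a b c : ℕ → R) (k : ℕ) : R :=
  ∑ t ∈ quadF k, (pdoCoeff (t.1 + t.2.1 + t.2.2.1) t.2.2.2 * pdoCoeff t.1 t.2.1) •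
    (a t.1 * (d^[t.2.1] (b t.2.2.1) *
      d^[t.2.2.2] (c (k - t.1 - t.2.1 - t.2.2.1 - t.2.2.2))))

lemma pdoMul_mul_left_eq_quadSum (d : R → R) (a b c : ℕ → R) (k : ℕ) :
    pdoMul d (pdoMul d a b) c k = quadSum d a b c k := by
  rw [pdoMul_tri]
  have step : ∀ t ∈ triF k,
      pdoCoeff t.1 t.2 • (pdoMul d a b t.1 * d^[t.2] (c (k - t.1 - t.2)))
      = ∑ s ∈ triF t.1, (pdoCoeff t.1 t.2 * pdoCoeff s.1 s.2) •
          (a s.1 * (d^[s.2] (b (t.1 - s.1 - s.2)) * d^[t.2] (c (k - t.1 - t.2)))) := by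
    intro t ht
    rw [pdoMul_tri, sum_mul, smul_sum]
    refine sum_congr rfl fun s hs => ?_
    rw [smul_mul_assoc, smul_smul, mul_assoc]
  rw [sum_congr rfl step, sum_sigma', quadSum]
  refine sum_nbij' (fun w => (w.2.1, w.2.2, w.1.1 - w.2.1 - w.2.2, w.1.2))
    (fun t => (⟨(t.1 + t.2.1 + t.2.2.1, t.2.2.2), (t.1, t.2.1)⟩ :
      (_ : ℕ × ℕ) × ℕ × ℕ))
    ?_ ?_ ?_ ?_ ?_
  · intro w hw
    simp only [mem_sigma, mem_triF] at hw
    simp only [mem_quadF]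
    omega
  · intro t ht
    simp only [mem_quadF] at ht
    simp only [mem_sigma, mem_triF]
    omega
  · intro w hw
    simp only [mem_sigma, mem_triF] at hw
    ext <;> simp <;> omega
  · intro t ht
    simp only [mem_quadF] at ht
    simp only
    ext <;> simp <;> omega
  · intro w hw
    simp only [mem_sigma, mem_triF] at hw
    obtain ⟨h1, h2⟩ := hw
    simp only
    have e1 : w.2.1 + w.2.2 + (w.1.1 - w.2.1 - w.2.2) = w.1.1 := by omega
    have e2 : k - w.2.1 - w.2.2 - (w.1.1 - w.2.1 - w.2.2) - w.1.2 = k - w.1.1 - w.1.2 := by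
      omega
    rw [e1, e2]

end Assoc

section Assoc2

open Finset

variable {R : Type*} [CommRing R]

lemma pdoMul_mul_right_eq_quadSum (d : Derivation ℤ R R) (a b c : ℕ → R) (k : ℕ) :
    pdoMul ⇑d a (pdoMul ⇑d b c) k = quadSum ⇑d a b c k := by
  rw [pdoMul_tri]
  have step : ∀ t ∈ triF k,
      pdoCoeff t.1 t.2 • (a t.1 * (⇑d)^[t.2] (pdoMul ⇑d b c (k - t.1 - t.2)))
      = ∑ s ∈ triF (k - t.1 - t.2), ∑ i ∈ range (t.2+1),
          (pdoCoeff t.1 t.2 * (pdoCoeff s.1 s.2 * (t.2.choose i : ℤ))) •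
            (a t.1 * ((⇑d)^[i] (b s.1) *
              (⇑d)^[t.2 - i + s.2] (c (k - t.1 - t.2 - s.1 - s.2)))) := by
    intro t ht
    rw [pdoMul_tri, dIter_sum]
    have inner : ∀ s ∈ triF (k - t.1 - t.2),
        (⇑d)^[t.2] (pdoCoeff s.1 s.2 •
          (b s.1 * (⇑d)^[s.2] (c (k - t.1 - t.2 - s.1 - s.2))))
        = ∑ i ∈ range (t.2+1), (pdoCoeff s.1 s.2 * (t.2.choose i : ℤ)) •
            ((⇑d)^[i] (b s.1) * (⇑d)^[t.2 - i + s.2] (c (k - t.1 - t.2 - s.1 - s.2))) := by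
      intro s hs
      rw [dIter_zsmul, dIter_mul, smul_sum]
      refine sum_congr rfl fun i hi => ?_
      rw [← natCast_zsmul, smul_smul, Function.iterate_add_apply]
    rw [sum_congr rfl inner, mul_sum, smul_sum]
    refine sum_congr rfl fun s hs => ?_
    rw [mul_sum, smul_sum]
    refine sum_congr rfl fun i hi => ?_
    rw [mul_smul_comm, smul_smul]
  rw [sum_congr rfl step]
  rw [Finset.sum_sigma' (triF k)
    (fun t => triF (k - t.1 - t.2))
    (fun t s => ∑ i ∈ range (t.2+1),
      (pdoCoeff t.1 t.2 * (pdoCoeff s.1 s.2 * (t.2.choose i : ℤ))) •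
        (a t.1 * ((⇑d)^[i] (b s.1) * (⇑d)^[t.2 - i + s.2] (c (k - t.1 - t.2 - s.1 - s.2)))))]
  rw [Finset.sum_sigma' ((triF k).sigma (fun t => triF (k - t.1 - t.2)))
    (fun w => range (w.1.2+1))
    (fun w i =>
      (pdoCoeff w.1.1 w.1.2 * (pdoCoeff w.2.1 w.2.2 * (w.1.2.choose i : ℤ))) •
        (a w.1.1 * ((⇑d)^[i] (b w.2.1) *
          (⇑d)^[w.1.2 - i + w.2.2] (c (k - w.1.1 - w.1.2 - w.2.1 - w.2.2)))))]
  have main : (∑ w ∈ ((triF k).sigma (fun t => triF (k - t.1 - t.2))).sigma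
      (fun w => range (w.1.2+1)),
      (pdoCoeff w.1.1.1 w.1.1.2 * (pdoCoeff w.1.2.1 w.1.2.2 * (w.1.1.2.choose w.2 : ℤ))) •
        (a w.1.1.1 * ((⇑d)^[w.2] (b w.1.2.1) *
          (⇑d)^[w.1.1.2 - w.2 + w.1.2.2] (c (k - w.1.1.1 - w.1.1.2 - w.1.2.1 - w.1.2.2)))))
      = ∑ t ∈ quadF k, ∑ q ∈ range (t.2.2.2+1),
      (pdoCoeff t.1 (t.2.1 + (t.2.2.2 - q)) *
        ((t.2.1 + (t.2.2.2 - q)).choose t.2.1 : ℤ) * pdoCoeff t.2.2.1 q) •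
        (a t.1 * ((⇑d)^[t.2.1] (b t.2.2.1) *
          (⇑d)^[t.2.2.2] (c (k - t.1 - t.2.1 - t.2.2.1 - t.2.2.2)))) := by
    rw [Finset.sum_sigma' (quadF k) (fun t => range (t.2.2.2+1))
      (fun t q =>
        (pdoCoeff t.1 (t.2.1 + (t.2.2.2 - q)) *
          ((t.2.1 + (t.2.2.2 - q)).choose t.2.1 : ℤ) * pdoCoeff t.2.2.1 q) •
          (a t.1 * ((⇑d)^[t.2.1] (b t.2.2.1) *
            (⇑d)^[t.2.2.2] (c (k - t.1 - t.2.1 - t.2.2.1 - t.2.2.2)))))]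
    refine sum_nbij'
      (fun w => (⟨(w.1.1.1, w.2, w.1.2.1, w.1.1.2 - w.2 + w.1.2.2), w.1.2.2⟩ :
        (_ : ℕ × ℕ × ℕ × ℕ) × ℕ))
      (fun v => (⟨⟨(v.1.1, v.1.2.1 + (v.1.2.2.2 - v.2)), (v.1.2.2.1, v.2)⟩, v.1.2.1⟩ :
        (_ : (_ : ℕ × ℕ) × ℕ × ℕ) × ℕ))
      ?_ ?_ ?_ ?_ ?_
    · intro w hw
      simp only [mem_sigma, mem_triF, mem_range] at hw
      simp only [mem_sigma, mem_quadF, mem_range]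
      omega
    · intro v hv
      simp only [mem_sigma, mem_quadF, mem_range] at hv
      simp only [mem_sigma, mem_triF, mem_range]
      omega
    · intro w hw
      simp only [mem_sigma, mem_triF, mem_range] at hw
      ext <;> simp <;> omega
    · intro v hv
      simp only [mem_sigma, mem_quadF, mem_range] at hv
      ext <;> simp <;> omega
    · intro w hw
      simp only [mem_sigma, mem_triF, mem_range] at hw
      obtain ⟨⟨h1, h2⟩, h3⟩ := hw
      simp only
      have e1 : w.2 + (w.1.1.2 - w.2 + w.1.2.2 - w.1.2.2) = w.1.1.2 := by omega
      have e2 : k - w.1.1.1 - w.2 - w.1.2.1 - (w.1.1.2 - w.2 + w.1.2.2)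
          = k - w.1.1.1 - w.1.1.2 - w.1.2.1 - w.1.2.2 := by omega
      rw [e1, e2]
      congr 1
      ring
  rw [main]
  rw [quadSum]
  refine sum_congr rfl fun t ht => ?_
  rw [← Finset.sum_smul, pdoCoeff_assoc t.1 t.2.1 t.2.2.1 t.2.2.2]

end Assoc2

section BasicAlg

open Finset

variable {R : Type*} [CommRing R]

lemma pdoMul_assoc (d : Derivation ℤ R R) (a b c : ℕ → R) :
    pdoMul ⇑d (pdoMul ⇑d a b) c = pdoMul ⇑d a (pdoMul ⇑d b c) := by
  funext k
  rw [pdoMul_mul_left_eq_quadSum, pdoMul_mul_right_eq_quadSum]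

lemma pdoMul_scalar_left (d : R → R) (r : R) (b : ℕ → R) (k : ℕ) :
    pdoMul d (pdoScalar r) b k = r * b k := by
  rw [pdoMul]
  rw [Finset.sum_eq_single 0]
  · rw [Finset.sum_eq_single 0]
    · simp [pdoScalar, pdoCoeff]
    · intro m hm hm0
      rw [pdoCoeff_zero, if_neg hm0, zero_smul]
    · intro h
      simp at h
  · intro n hn hn0
    apply Finset.sum_eq_zero
    intro m hm
    simp [pdoScalar, hn0]
  · intro h
    simp at h

lemma pdoScalar_one : (pdoScalar (1 : R)) = pdoOne := by
  funext n; simp [pdoScalar, pdoOne]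

lemma pdoMul_one_left (d : R → R) (b : ℕ → R) : pdoMul d pdoOne b = b := by
  funext k
  rw [← pdoScalar_one, pdoMul_scalar_left, one_mul]

lemma pdoMul_scalar_scalar (d : R → R) (r s : R) :
    pdoMul d (pdoScalar r) (pdoScalar s) = pdoScalar (r * s) := by
  funext k
  rw [pdoMul_scalar_left]
  simp [pdoScalar, mul_ite]

lemma pdoMul_add_left (d : R → R) (a a' b : ℕ → R) :
    pdoMul d (a + a') b = pdoMul d a b + pdoMul d a' b := by
  funext k
  simp only [pdoMul, Pi.add_apply, add_mul, smul_add, Finset.sum_add_distrib]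

lemma pdoMul_sub_left (d : R → R) (a a' b : ℕ → R) :
    pdoMul d (a - a') b = pdoMul d a b - pdoMul d a' b := by
  funext k
  simp only [pdoMul, Pi.sub_apply, sub_mul, smul_sub, Finset.sum_sub_distrib]

def deltaSeq {R : Type*} [CommRing R] (p : ℕ) : ℕ → R := fun n => if n = p then 1 else 0

lemma deltaSeq_zero : (deltaSeq 0 : ℕ → R) = pdoOne := by
  funext n; simp [deltaSeq, pdoOne]

lemma deltaSeq_one : (deltaSeq 1 : ℕ → R) = pdoE1 := by
  funext n; simp [deltaSeq, pdoE1]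

lemma pdoMul_delta_eval (d : R → R) (p : ℕ) (b : ℕ → R) (n : ℕ) (hp : p ≤ n) :
    pdoMul d (deltaSeq p) b n
      = ∑ m ∈ Finset.range (n + 1 - p), pdoCoeff p m • d^[m] (b (n - p - m)) := by
  rw [pdoMul]
  rw [Finset.sum_eq_single p]
  · refine Finset.sum_congr rfl fun m hm => ?_
    simp [deltaSeq]
  · intro q hq hqp
    apply Finset.sum_eq_zero
    intro m hm
    simp [deltaSeq, hqp]
  · intro h
    simp at h
    omega

lemma pdoMul_delta_vanish (d : R → R) (p : ℕ) (b : ℕ → R) (k : ℕ) (h : k < p) :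
    pdoMul d (deltaSeq p) b k = 0 := by
  rw [pdoMul]
  apply Finset.sum_eq_zero
  intro n hn
  apply Finset.sum_eq_zero
  intro m hm
  simp only [Finset.mem_range] at hn
  have : n ≠ p := by omega
  simp [deltaSeq, this]

lemma pdoMul_decomp (d : R → R) (a b : ℕ → R) (n : ℕ) :
    pdoMul d a b n = ∑ p ∈ Finset.range (n+1), a p * pdoMul d (deltaSeq p) b n := by
  rw [pdoMul]
  refine Finset.sum_congr rfl fun p hp => ?_
  simp only [Finset.mem_range] at hp
  rw [pdoMul_delta_eval d p b n (by omega), Finset.mul_sum]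
  refine Finset.sum_congr rfl fun m hm => ?_
  rw [mul_smul_comm]

lemma pdoMul_congr_right (d : R → R) (a : ℕ → R) {b b' : ℕ → R} (k : ℕ)
    (h : ∀ j ≤ k, b j = b' j) : pdoMul d a b k = pdoMul d a b' k := by
  rw [pdoMul, pdoMul]
  refine Finset.sum_congr rfl fun n hn => Finset.sum_congr rfl fun m hm => ?_
  rw [h (k - n - m) (by omega)]

lemma pdoMul_sum_right (d : Derivation ℤ R R) (a : ℕ → R) {ι : Type*} (s : Finset ι)
    (g : ι → ℕ → R) (k : ℕ) :
    pdoMul ⇑d a (fun j => ∑ q ∈ s, g q j) k = ∑ q ∈ s, pdoMul ⇑d a (g q) k := by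
  simp only [pdoMul, dIter_sum, Finset.mul_sum, Finset.smul_sum]
  exact Eq.trans (Finset.sum_congr rfl fun n _ => Finset.sum_comm) Finset.sum_comm

lemma pdoMul_one_right (d : Derivation ℤ R R) (a : ℕ → R) :
    pdoMul ⇑d a pdoOne = a := by
  funext k
  rw [pdoMul, Finset.sum_eq_single k]
  · rw [Finset.sum_eq_single 0]
    · simp [pdoOne, pdoCoeff_zero_right]
    · intro m hm hm0
      simp only [Finset.mem_range] at hm
      omega
    · intro h
      simp at h
  · intro n hn hnk
    simp only [Finset.mem_range] at hn
    apply Finset.sum_eq_zero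
    intro m hm
    simp only [Finset.mem_range] at hm
    rcases Nat.lt_or_ge m (k - n) with h1 | h1
    · have : pdoOne (k - n - m) = (0 : R) := by
        simp only [pdoOne, if_neg (by omega : ¬ k - n - m = 0)]
      rw [this, dIter_zero, mul_zero, smul_zero]
    · have hm1 : m = k - n := by omega
      have hm2 : 1 ≤ m := by omega
      have : pdoOne (k - n - m) = (1 : R) := by
        simp only [pdoOne, if_pos (by omega : k - n - m = 0)]
      rw [this, show m = (m - 1) + 1 by omega, dIter_one, mul_zero, smul_zero]
  · intro h
    simp at h

lemma pdoMul_e1_right (d : Derivation ℤ R R) (a : ℕ → R) (k : ℕ) :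
    pdoMul ⇑d a pdoE1 k = if k = 0 then 0 else a (k-1) := by
  rcases Nat.eq_zero_or_pos k with rfl | hk
  · simp [pdoMul, pdoE1, pdoCoeff_zero_right]
  rw [if_neg (by omega), pdoMul, Finset.sum_eq_single (k-1)]
  · rw [Finset.sum_eq_single 0]
    · simp only [pdoCoeff_zero_right, one_smul, Function.iterate_zero, id_eq]
      rw [show k - (k-1) - 0 = 1 by omega]
      simp [pdoE1]
    · intro m hm hm0
      simp only [Finset.mem_range] at hm
      rcases Nat.lt_or_ge m (k - (k-1)) with h1 | h1
      · omega
      · have : k - (k-1) - m = 0 := by omega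
        rw [this, show pdoE1 0 = (0:R) from by simp [pdoE1], dIter_zero, mul_zero, smul_zero]
    · intro h
      simp at h
  · intro n hn hnk
    simp only [Finset.mem_range] at hn
    apply Finset.sum_eq_zero
    intro m hm
    simp only [Finset.mem_range] at hm
    rcases eq_or_ne (k - n - m) 1 with h1 | h1
    ·
      have hm2 : 1 ≤ m := by omega
      rw [h1, show pdoE1 1 = (1:R) from by simp [pdoE1],
        show m = (m - 1) + 1 by omega, dIter_one, mul_zero, smul_zero]
    · rw [show pdoE1 (k - n - m) = (0:R) from by simp [pdoE1, h1], dIter_zero,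
        mul_zero, smul_zero]
  · intro h
    simp at h

lemma pdoMul_e1_delta (d : Derivation ℤ R R) (p : ℕ) :
    pdoMul ⇑d pdoE1 (deltaSeq p : ℕ → R) = deltaSeq (p+1) := by
  funext k
  rw [← deltaSeq_one, pdoMul]
  rcases Nat.eq_zero_or_pos k with rfl | hk
  · simp [deltaSeq]
  rw [Finset.sum_eq_single 1]
  · rw [Finset.sum_eq_single (k-1-p)]
    · rcases eq_or_ne k (p+1) with rfl | hkp
      · simp only [show p+1-1-p = 0 by omega, Function.iterate_zero, id_eq]
        simp [deltaSeq, pdoCoeff_zero_right, show p+1-1-0 = p by omega]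
      · -- k ≠ p+1 : each side 0
        rcases Nat.lt_or_ge (k-1) p with h1 | h1
        ·
          simp only [show k-1-p = 0 by omega, Function.iterate_zero, id_eq]
          simp [deltaSeq, show ¬ k-1 = p from by omega,
            show ¬ k = p+1 from hkp]
        · -- k-1 > p: m = k-1-p ≥ 1, delta p (k-1-m) = delta p p = 1, d^[m] 1 = 0
          have hm : 1 ≤ k-1-p := by omega
          simp only [show k - 1 - (k-1-p) = p from by omega]
          rw [show (deltaSeq p : ℕ → R) p = 1 from by simp [deltaSeq],
            show k-1-p = (k-1-p-1)+1 from by omega, dIter_one]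
          simp [deltaSeq, show ¬ k = p+1 from hkp]
    · intro m hm hmp
      simp only [Finset.mem_range] at hm
      rcases eq_or_ne (k - 1 - m) p with h1 | h1
      · omega
      · rw [show (deltaSeq p : ℕ → R) (k-1-m) = 0 from by simp [deltaSeq, h1], dIter_zero,
          mul_zero, smul_zero]
    · intro h
      simp only [Finset.mem_range, not_lt] at h
      -- k+1-1 ≤ k-1-p: impossible unless ... k - 1 - p ≥ k - 1? means p=0? careful
      -- h : k - 1 - p ∉ range (k + 1 - 1), i.e. k ≤ k-1-p, impossible since k ≥ 1
      omega
  · intro n hn hn1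
    simp only [Finset.mem_range] at hn
    apply Finset.sum_eq_zero
    intro m hm
    simp [pdoE1, deltaSeq, hn1]
  · intro h
    simp at h
    omega

end BasicAlg

section Specific

open Finset

variable {R : Type*} [CommRing R]

/-- `∂' = f·∂` as a bona fide derivation. -/
def dpd (D : Derivation ℤ R R) (f : Rˣ) : Derivation ℤ R R := (f : R) • D

lemma dPrime_eq (D : Derivation ℤ R R) (f : Rˣ) : dPrime D f = ⇑(dpd D f) := by
  funext x
  simp [dPrime, dpd]

lemma pdoMul_e1_scalar (d : Derivation ℤ R R) (s : R) (k : ℕ) :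
    pdoMul ⇑d pdoE1 (pdoScalar s) k
      = if k = 0 then 0 else (-1:R)^(k-1) * (⇑d)^[k-1] s := by
  rcases Nat.eq_zero_or_pos k with rfl | hk
  · simp [pdoMul, pdoE1, pdoCoeff_zero_right]
  rw [if_neg (by omega), pdoMul, Finset.sum_eq_single 1]
  · rw [Finset.sum_eq_single (k-1)]
    · rw [show pdoE1 1 = (1:R) from by simp [pdoE1], one_mul,
        show k - 1 - (k-1) = 0 by omega, show pdoScalar s 0 = s from rfl,
        pdoCoeff_one, zsmul_eq_mul]
      push_cast
      ring
    · intro m hm hmk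
      simp only [Finset.mem_range] at hm
      have : ¬ (k - 1 - m = 0) := by omega
      rw [show pdoScalar s (k-1-m) = 0 from by simp [pdoScalar, this], dIter_zero,
        mul_zero, smul_zero]
    · intro h
      simp at h
      omega
  · intro n hn hn1
    apply Finset.sum_eq_zero
    intro m hm
    simp [pdoE1, hn1]
  · intro h
    simp at h
    omega

/-- `s·D⁻¹ = D⁻¹·s + D⁻¹·(ds)·D⁻¹` -/
lemma pdo_rec2 (d : Derivation ℤ R R) (s : R) :
    pdoMul ⇑d (pdoScalar s) pdoE1
      = pdoMul ⇑d pdoE1 (pdoScalar s)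
        + pdoMul ⇑d (pdoMul ⇑d pdoE1 (pdoScalar (d s))) pdoE1 := by
  funext k
  rw [Pi.add_apply, pdoMul_e1_right, pdoMul_e1_right, pdoMul_e1_scalar, pdoMul_e1_scalar]
  rcases Nat.eq_zero_or_pos k with rfl | hk
  · simp
  rcases eq_or_ne k 1 with rfl | hk1
  · simp [pdoScalar]
  rw [if_neg (by omega), if_neg (by omega), if_neg (by omega), if_neg (show ¬ (k-1 = 0) by omega),
    show pdoScalar s (k-1) = 0 from by simp [pdoScalar, show ¬ (k-1 = 0) from by omega],
    show k-1-1 = k-2 by omega,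
    show (⇑d)^[k-2] (d s) = (⇑d)^[k-1] s from by
      rw [show k-1 = (k-2)+1 by omega, Function.iterate_succ_apply],
    show k - 1 = (k-2)+1 by omega, pow_succ]
  ring

lemma uElt_apply (D : Derivation ℤ R R) (f : Rˣ) (k : ℕ) :
    uElt D f k = if k = 0 then 0 else (-1:R)^(k-1) * (dPrime D f)^[k-1] (f:R) := by
  rw [uElt, dPrime_eq, pdoMul_e1_scalar]

lemma uElt_zero' (D : Derivation ℤ R R) (f : Rˣ) : uElt D f 0 = 0 := by
  rw [uElt_apply]; simp

lemma uElt_one (D : Derivation ℤ R R) (f : Rˣ) : uElt D f 1 = (f : R) := by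
  rw [uElt_apply]; simp

lemma pdoPow_vanish (D : Derivation ℤ R R) (f : Rˣ) :
    ∀ n k : ℕ, k < n → pdoPow (dPrime D f) (uElt D f) n k = 0 := by
  intro n
  induction n with
  | zero => intro k hk; omega
  | succ n ih =>
    intro k hk
    rw [pdoPow, pdoMul]
    apply Finset.sum_eq_zero
    intro n' hn'
    apply Finset.sum_eq_zero
    intro m hm
    simp only [Finset.mem_range] at hn' hm
    rcases Nat.eq_zero_or_pos n' with rfl | hn0
    · rw [uElt_zero', zero_mul, smul_zero]
    · rw [ih (k - n' - m) (by omega), dPrime_eq, dIter_zero, mul_zero, smul_zero]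

lemma pdoPow_diag (D : Derivation ℤ R R) (f : Rˣ) (n : ℕ) :
    pdoPow (dPrime D f) (uElt D f) n n = (f : R)^n := by
  induction n with
  | zero => simp [pdoPow, pdoOne]
  | succ n ih =>
    rw [pdoPow, pdoMul, Finset.sum_eq_single 1]
    · rw [Finset.sum_eq_single 0]
      · simp only [pdoCoeff_zero_right, one_smul, Function.iterate_zero, id_eq]
        rw [show n+1-1-0 = n by omega, ih, uElt_one, pow_succ]
        ring
      · intro m hm hm0
        simp only [Finset.mem_range] at hm
        rw [pdoPow_vanish D f n (n+1-1-m) (by omega), dPrime_eq, dIter_zero,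
          mul_zero, smul_zero]
      · intro h
        simp at h
    · intro n' hn' hn1
      simp only [Finset.mem_range] at hn'
      apply Finset.sum_eq_zero
      intro m hm
      simp only [Finset.mem_range] at hm
      rcases Nat.eq_zero_or_pos n' with rfl | hn0
      · rw [uElt_zero', zero_mul, smul_zero]
      · rw [pdoPow_vanish D f n (n+1-n'-m) (by omega), dPrime_eq, dIter_zero,
          mul_zero, smul_zero]
    · intro h
      simp at h

lemma pdoChange_apply (D : Derivation ℤ R R) (f : Rˣ) (a : ℕ → R) (k : ℕ) :
    pdoChange D f a k
      = ∑ n ∈ Finset.range (k+1), a n * pdoPow (dPrime D f) (uElt D f) n k := by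
  rw [pdoChange]
  exact Finset.sum_congr rfl fun n _ => pdoMul_scalar_left _ _ _ _

lemma pdoChange_congr (D : Derivation ℤ R R) (f : Rˣ) {a a' : ℕ → R} (k : ℕ)
    (h : ∀ n ≤ k, a n = a' n) : pdoChange D f a k = pdoChange D f a' k := by
  rw [pdoChange_apply, pdoChange_apply]
  refine Finset.sum_congr rfl fun n hn => ?_
  simp only [Finset.mem_range] at hn
  rw [h n (by omega)]

lemma pdoChange_add (D : Derivation ℤ R R) (f : Rˣ) (a b : ℕ → R) :
    pdoChange D f (a + b) = pdoChange D f a + pdoChange D f b := by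
  funext k
  simp only [pdoChange_apply, Pi.add_apply, add_mul, Finset.sum_add_distrib]

lemma pdoChange_sub (D : Derivation ℤ R R) (f : Rˣ) (a b : ℕ → R) :
    pdoChange D f (a - b) = pdoChange D f a - pdoChange D f b := by
  funext k
  simp only [pdoChange_apply, Pi.sub_apply, sub_mul, Finset.sum_sub_distrib]

lemma pdoChange_scalar (D : Derivation ℤ R R) (f : Rˣ) (r : R) :
    pdoChange D f (pdoScalar r) = pdoScalar r := by
  funext k
  rw [pdoChange_apply, Finset.sum_eq_single 0]
  · simp [pdoScalar, pdoPow, pdoOne]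
  · intro n hn hn0
    simp [pdoScalar, hn0]
  · intro h
    simp at h

lemma pdoChange_sum (D : Derivation ℤ R R) (f : Rˣ) {ι : Type*} (s : Finset ι)
    (g : ι → ℕ → R) (k : ℕ) :
    pdoChange D f (fun j => ∑ q ∈ s, g q j) k = ∑ q ∈ s, pdoChange D f (g q) k := by
  simp only [pdoChange_apply, Finset.sum_mul]
  exact Finset.sum_comm

/-- generic triangular expansion lemma -/
lemma sum_tri_expand (k : ℕ) (x : ℕ → R) (Z : ℕ → ℕ → R)
    (hZ : ∀ p n, n < p → Z p n = 0) (W : ℕ → R) :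
    ∑ n ∈ range (k+1), (∑ p ∈ range (n+1), x p * Z p n) * W n
      = ∑ p ∈ range (k+1), x p * ∑ n ∈ range (k+1), Z p n * W n := by
  have step : ∀ n ∈ range (k+1),
      (∑ p ∈ range (n+1), x p * Z p n) * W n
        = ∑ p ∈ range (k+1), x p * (Z p n * W n) := by
    intro n hn
    simp only [mem_range] at hn
    have ext1 : ∑ p ∈ range (n+1), x p * Z p n = ∑ p ∈ range (k+1), x p * Z p n := by
      refine Finset.sum_subset (Finset.range_subset_range.2 (by omega : n+1 ≤ k+1)) ?_
      intro p hp hnp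
      simp only [mem_range] at hp hnp
      rw [hZ p n (by omega), mul_zero]
    rw [ext1, Finset.sum_mul]
    exact sum_congr rfl fun p _ => mul_assoc _ _ _
  rw [Finset.sum_congr rfl step, Finset.sum_comm]
  exact Finset.sum_congr rfl fun p _ => (Finset.mul_sum _ _ _).symm

end Specific

section Claims

open Finset

variable {R : Type*} [CommRing R]

lemma pdoMul_row (d : R → R) (A y : ℕ → R) (k : ℕ) :
    pdoMul d A y k = ∑ n ∈ range (k+1), A n *
      (∑ m ∈ range (k+1-n), pdoCoeff n m • d^[m] (y (k-n-m))) := by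
  rw [pdoMul]
  refine sum_congr rfl fun n hn => ?_
  rw [Finset.mul_sum]
  exact sum_congr rfl fun m hm => (mul_smul_comm _ _ _).symm

lemma pdoMul_left_expand (d : R → R) (x : ℕ → R) (Z : ℕ → ℕ → R)
    (hZ : ∀ p n, n < p → Z p n = 0) (y : ℕ → R) (k : ℕ) :
    pdoMul d (fun n => ∑ p ∈ range (n+1), x p * Z p n) y k
      = ∑ p ∈ range (k+1), x p * pdoMul d (Z p) y k := by
  rw [pdoMul_row, sum_tri_expand k x Z hZ]
  exact sum_congr rfl fun p _ => by rw [pdoMul_row]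

lemma pdoPow_succ_right (D : Derivation ℤ R R) (f : Rˣ) (p : ℕ) :
    pdoPow (dPrime D f) (uElt D f) (p+1)
      = pdoMul (dPrime D f) (pdoPow (dPrime D f) (uElt D f) p) (uElt D f) := by
  induction p with
  | zero =>
    show pdoMul (dPrime D f) (uElt D f) pdoOne = pdoMul (dPrime D f) pdoOne (uElt D f)
    rw [pdoMul_one_left, dPrime_eq, pdoMul_one_right]
  | succ p ih =>
    show pdoMul (dPrime D f) (uElt D f) (pdoPow (dPrime D f) (uElt D f) (p+1))
      = pdoMul (dPrime D f) (pdoPow (dPrime D f) (uElt D f) (p+1)) (uElt D f)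
    rw [ih, dPrime_eq, ← pdoMul_assoc (dpd D f), ← dPrime_eq]
    exact congrArg (fun y => pdoMul (dPrime D f) y (uElt D f)) ih

lemma claimC1 (D : Derivation ℤ R R) (f : Rˣ) (x : ℕ → R) :
    pdoChange D f (pdoMul ⇑D x pdoE1)
      = pdoMul (dPrime D f) (pdoChange D f x) (uElt D f) := by
  funext k
  have hshift : pdoMul ⇑D x pdoE1 = fun n => if n = 0 then 0 else x (n-1) :=
    funext fun n => pdoMul_e1_right D x n
  have hPhi : pdoChange D f x
      = fun n => ∑ p ∈ range (n+1), x p * pdoPow (dPrime D f) (uElt D f) p n :=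
    funext fun n => pdoChange_apply D f x n
  rw [hshift, pdoChange_apply, hPhi,
    pdoMul_left_expand (dPrime D f) x (fun p => pdoPow (dPrime D f) (uElt D f) p)
      (fun p n h => pdoPow_vanish D f p n h) (uElt D f) k]
  rw [Finset.sum_range_succ' (fun n => (if n = 0 then (0:R) else x (n-1)) *
    pdoPow (dPrime D f) (uElt D f) n k) k]
  rw [Finset.sum_range_succ (fun p => x p * pdoMul (dPrime D f)
    (pdoPow (dPrime D f) (uElt D f) p) (uElt D f) k) k]
  rw [← pdoPow_succ_right D f k, pdoPow_vanish D f (k+1) k (by omega), mul_zero, add_zero]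
  simp
  refine sum_congr rfl fun p hp => ?_
  rw [← pdoPow_succ_right D f p]

lemma u_mul_scalar (D : Derivation ℤ R R) (f : Rˣ) (s : R) :
    pdoMul (dPrime D f) (uElt D f) (pdoScalar s)
      = pdoMul (dPrime D f) pdoE1 (pdoScalar ((f:R) * s)) := by
  rw [uElt, dPrime_eq, pdoMul_assoc (dpd D f), ← dPrime_eq, pdoMul_scalar_scalar]

lemma claimG (D : Derivation ℤ R R) (f : Rˣ) (r : R) :
    pdoMul (dPrime D f)
      (pdoScalar r - pdoMul (dPrime D f) (uElt D f) (pdoScalar (D r)))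
      (uElt D f)
      = pdoMul (dPrime D f) (uElt D f) (pdoScalar r) := by
  have hdr : (dpd D f) r = (f : R) * D r := by simp [dpd]
  have rec2 := pdo_rec2 (dpd D f) r
  have step := congrArg (fun y => pdoMul ⇑(dpd D f) y (pdoScalar (f : R))) rec2
  rw [pdoMul_assoc (dpd D f), pdoMul_add_left, pdoMul_assoc (dpd D f),
    pdoMul_assoc (dpd D f), pdoMul_scalar_scalar, hdr] at step
  -- step : (pdoScalar r) *' (e₁ *' fe₀) = e₁ *' (r*f)e₀ + T'(f·Dr) *' (e₁ *' fe₀)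
  have hu : pdoMul ⇑(dpd D f) pdoE1 (pdoScalar (f:R)) = uElt D f := by
    rw [uElt, dPrime_eq]
  rw [hu] at step
  have h1 : pdoMul ⇑(dpd D f) pdoE1 (pdoScalar (r * (f:R))) =
      pdoMul (dPrime D f) (uElt D f) (pdoScalar r) := by
    rw [u_mul_scalar, dPrime_eq, mul_comm (f:R) r]
  have h2 : pdoMul ⇑(dpd D f) pdoE1 (pdoScalar ((f:R) * D r)) =
      pdoMul (dPrime D f) (uElt D f) (pdoScalar (D r)) := by
    rw [u_mul_scalar, dPrime_eq]
  rw [h1, h2] at step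
  rw [← dPrime_eq] at step
  -- step : (pdoScalar r) *' u = u *' (re₀) + (u *' (Dr e₀)) *' u
  rw [pdoMul_sub_left, step]
  abel

lemma pdoMul_congr_left_below (d : Derivation ℤ R R) {x y w : ℕ → R} (hw : w 0 = 0)
    (k : ℕ) (h : ∀ n < k, x n = y n) : pdoMul ⇑d x w k = pdoMul ⇑d y w k := by
  rw [pdoMul, pdoMul]
  refine sum_congr rfl fun n hn => ?_
  simp only [mem_range] at hn
  rcases Nat.lt_or_ge n k with h1 | h1
  · rw [h n h1]
  · have hnk : n = k := by omega
    subst hnk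
    rw [show n+1-n = 1 by omega, Finset.sum_range_one, Finset.sum_range_one,
      show n - n - 0 = 0 by omega, hw]
    simp only [Function.iterate_zero, id_eq, mul_zero, smul_zero]

lemma claimB (D : Derivation ℤ R R) (f : Rˣ) :
    ∀ k : ℕ, ∀ r : R, pdoChange D f (pdoMul ⇑D pdoE1 (pdoScalar r)) k
      = pdoMul (dPrime D f) (uElt D f) (pdoScalar r) k := by
  intro k
  induction k using Nat.strong_induction_on with
  | _ k ih =>
    intro r
    -- Rec in the source ring
    have rec0 : pdoMul ⇑D pdoE1 (pdoScalar r)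
        = pdoMul ⇑D (pdoScalar r - pdoMul ⇑D pdoE1 (pdoScalar (D r))) pdoE1 := by
      rw [pdoMul_sub_left]
      have := pdo_rec2 D r
      rw [this]
      abel
    rw [rec0, claimC1]
    have hcongr : pdoMul (dPrime D f)
        (pdoChange D f (pdoScalar r - pdoMul ⇑D pdoE1 (pdoScalar (D r)))) (uElt D f) k
        = pdoMul (dPrime D f)
        (pdoScalar r - pdoMul (dPrime D f) (uElt D f) (pdoScalar (D r))) (uElt D f) k := by
      rw [dPrime_eq]
      refine pdoMul_congr_left_below (dpd D f) (uElt_zero' D f) k ?_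
      intro n hn
      rw [pdoChange_sub, Pi.sub_apply, Pi.sub_apply, pdoChange_scalar, ih n hn (D r),
        dPrime_eq]
    rw [hcongr, claimG]

lemma claimC (D : Derivation ℤ R R) (f : Rˣ) (q : ℕ) (x : ℕ → R) :
    pdoChange D f (pdoMul ⇑D x (deltaSeq q))
      = pdoMul (dPrime D f) (pdoChange D f x) (pdoPow (dPrime D f) (uElt D f) q) := by
  induction q generalizing x with
  | zero =>
    rw [deltaSeq_zero, pdoMul_one_right]
    show _ = pdoMul (dPrime D f) (pdoChange D f x) pdoOne
    rw [dPrime_eq, pdoMul_one_right]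
  | succ q ih =>
    have hdelta : (deltaSeq (q+1) : ℕ → R) = pdoMul ⇑D (deltaSeq q) pdoE1 := by
      funext n
      rw [pdoMul_e1_right]
      rcases Nat.eq_zero_or_pos n with rfl | hn
      · simp [deltaSeq]
      · rw [if_neg (by omega)]
        simp only [deltaSeq]
        congr 1
        simp only [eq_iff_iff]
        omega
    rw [hdelta, ← pdoMul_assoc D, claimC1, ih, dPrime_eq,
      pdoMul_assoc (dpd D f), ← dPrime_eq, ← pdoPow_succ_right]

lemma claimA_single (D : Derivation ℤ R R) (f : Rˣ) (r : R) (q : ℕ) :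
    pdoChange D f (pdoMul ⇑D pdoE1 (pdoMul ⇑D (pdoScalar r) (deltaSeq q)))
      = pdoMul (dPrime D f) (uElt D f)
          (pdoChange D f (pdoMul ⇑D (pdoScalar r) (deltaSeq q))) := by
  have hB : pdoChange D f (pdoMul ⇑D pdoE1 (pdoScalar r))
      = pdoMul (dPrime D f) (uElt D f) (pdoScalar r) :=
    funext fun k => claimB D f k r
  rw [← pdoMul_assoc D, claimC, hB, claimC, pdoChange_scalar, dPrime_eq,
    pdoMul_assoc (dpd D f)]

lemma claimA (D : Derivation ℤ R R) (f : Rˣ) (b : ℕ → R) :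
    pdoChange D f (pdoMul ⇑D pdoE1 b)
      = pdoMul (dPrime D f) (uElt D f) (pdoChange D f b) := by
  funext k
  set g : ℕ → ℕ → R := fun q => pdoMul ⇑D (pdoScalar (b q)) (deltaSeq q) with hg
  set bt : ℕ → R := fun j => ∑ q ∈ range (k+1), g q j with hbt
  have htrunc : ∀ j ≤ k, b j = bt j := by
    intro j hj
    rw [hbt]
    simp only
    rw [Finset.sum_eq_single j]
    · rw [hg]
      simp only
      rw [pdoMul_scalar_left]
      simp [deltaSeq]
    · intro q hq hqj
      rw [hg]
      simp only
      rw [pdoMul_scalar_left]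
      simp [deltaSeq, Ne.symm hqj]
    · intro h
      simp only [mem_range] at h
      omega
  have step1 : pdoChange D f (pdoMul ⇑D pdoE1 b) k
      = pdoChange D f (pdoMul ⇑D pdoE1 bt) k := by
    refine pdoChange_congr D f k fun n hn => ?_
    exact pdoMul_congr_right ⇑D pdoE1 n fun j hj => htrunc j (le_trans hj hn)
  have step2 : pdoMul (dPrime D f) (uElt D f) (pdoChange D f b) k
      = pdoMul (dPrime D f) (uElt D f) (pdoChange D f bt) k := by
    refine pdoMul_congr_right (dPrime D f) (uElt D f) k fun l hl => ?_
    exact pdoChange_congr D f l fun n hn => htrunc n (le_trans hn hl)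
  rw [step1, step2]
  have hbt2 : pdoMul ⇑D pdoE1 bt = fun n => ∑ q ∈ range (k+1), pdoMul ⇑D pdoE1 (g q) n :=
    funext fun n => pdoMul_sum_right D pdoE1 (range (k+1)) g n
  have hbt3 : pdoChange D f bt = fun l => ∑ q ∈ range (k+1), pdoChange D f (g q) l :=
    funext fun l => pdoChange_sum D f (range (k+1)) g l
  rw [hbt2, hbt3, pdoChange_sum D f (range (k+1)) _ k]
  have single : ∀ q ∈ range (k+1), pdoChange D f (pdoMul ⇑D pdoE1 (g q)) k
      = pdoMul (dPrime D f) (uElt D f) (pdoChange D f (g q)) k := by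
    intro q _
    rw [hg]
    simp only
    rw [claimA_single D f (b q) q]
  rw [sum_congr rfl single, dPrime_eq,
    ← pdoMul_sum_right (dpd D f) (uElt D f) (range (k+1)) (fun q => pdoChange D f (g q)) k]

lemma claimAdelta (D : Derivation ℤ R R) (f : Rˣ) (p : ℕ) (b : ℕ → R) :
    pdoChange D f (pdoMul ⇑D (deltaSeq p) b)
      = pdoMul (dPrime D f) (pdoPow (dPrime D f) (uElt D f) p) (pdoChange D f b) := by
  induction p generalizing b with
  | zero =>
    rw [deltaSeq_zero, pdoMul_one_left]
    show _ = pdoMul (dPrime D f) pdoOne (pdoChange D f b)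
    rw [pdoMul_one_left]
  | succ p ih =>
    have h1 : (deltaSeq (p+1) : ℕ → R) = pdoMul ⇑D pdoE1 (deltaSeq p) :=
      (pdoMul_e1_delta D p).symm
    rw [h1, pdoMul_assoc D, claimA, ih, dPrime_eq, ← pdoMul_assoc (dpd D f), ← dPrime_eq]
    rfl

lemma pdoChange_expand (D : Derivation ℤ R R) (f : Rˣ) (x : ℕ → R) (Z : ℕ → ℕ → R)
    (hZ : ∀ p n, n < p → Z p n = 0) (k : ℕ) :
    pdoChange D f (fun n => ∑ p ∈ range (n+1), x p * Z p n) k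
      = ∑ p ∈ range (k+1), x p * pdoChange D f (Z p) k := by
  rw [pdoChange_apply, sum_tri_expand k x Z hZ]
  exact sum_congr rfl fun p _ => by rw [pdoChange_apply]

lemma pdoChange_mul (D : Derivation ℤ R R) (f : Rˣ) (a b : ℕ → R) :
    pdoChange D f (pdoMul ⇑D a b)
      = pdoMul (dPrime D f) (pdoChange D f a) (pdoChange D f b) := by
  funext k
  have hdecomp : pdoMul ⇑D a b
      = fun n => ∑ p ∈ range (n+1), a p * pdoMul ⇑D (deltaSeq p) b n :=
    funext fun n => pdoMul_decomp ⇑D a b n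
  rw [hdecomp, pdoChange_expand D f a _
    (fun p n h => pdoMul_delta_vanish ⇑D p b n h) k]
  have hPhi : pdoChange D f a
      = fun n => ∑ p ∈ range (n+1), a p * pdoPow (dPrime D f) (uElt D f) p n :=
    funext fun n => pdoChange_apply D f a n
  rw [hPhi, pdoMul_left_expand (dPrime D f) a _
    (fun p n h => pdoPow_vanish D f p n h) (pdoChange D f b) k]
  refine sum_congr rfl fun p _ => ?_
  rw [claimAdelta D f p b]

end Claims

section Bij

open Finset

variable {R : Type*} [CommRing R]

/-- The inverse of `pdoChange`, defined by strong recursion. -/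
noncomputable def pdoInv (D : Derivation ℤ R R) (f : Rˣ) (c : ℕ → R) : ℕ → R :=
  fun k => Nat.strongRecOn k (fun k ih =>
    ((f⁻¹ : Rˣ) : R)^k * (c k - ∑ n ∈ Finset.range k,
      (if h : n < k then ih n h else 0) * pdoPow (dPrime D f) (uElt D f) n k))

lemma pdoInv_eq (D : Derivation ℤ R R) (f : Rˣ) (c : ℕ → R) (k : ℕ) :
    pdoInv D f c k = ((f⁻¹ : Rˣ) : R)^k * (c k - ∑ n ∈ Finset.range k,
      pdoInv D f c n * pdoPow (dPrime D f) (uElt D f) n k) := by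
  conv_lhs => rw [pdoInv]
  rw [Nat.strongRecOn_eq]
  refine congrArg (fun s => ((f⁻¹ : Rˣ) : R)^k * (c k - s)) ?_
  refine Finset.sum_congr rfl fun n hn => ?_
  rw [dif_pos (Finset.mem_range.mp hn)]
  rfl

lemma pdoChange_pdoInv (D : Derivation ℤ R R) (f : Rˣ) (c : ℕ → R) :
    pdoChange D f (pdoInv D f c) = c := by
  funext k
  rw [pdoChange_apply, Finset.sum_range_succ, pdoPow_diag]
  set S := ∑ n ∈ Finset.range k, pdoInv D f c n * pdoPow (dPrime D f) (uElt D f) n k with hS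
  rw [pdoInv_eq D f c k, ← hS]
  have hunit : ((f⁻¹ : Rˣ) : R)^k * ((f : R))^k = 1 := by
    rw [← mul_pow, Units.inv_mul, one_pow]
  have h2 : ((f⁻¹ : Rˣ) : R)^k * (c k - S) * ((f : R))^k = c k - S := by
    rw [mul_comm (((f⁻¹ : Rˣ) : R)^k) (c k - S), mul_assoc, hunit, mul_one]
  rw [h2]
  ring

lemma pdoChange_injective (D : Derivation ℤ R R) (f : Rˣ) :
    Function.Injective (pdoChange D f) := by
  intro a b h
  funext k
  induction k using Nat.strong_induction_on with
  | _ k ih =>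
    have hk := congrFun h k
    rw [pdoChange_apply, pdoChange_apply, Finset.sum_range_succ, Finset.sum_range_succ,
      pdoPow_diag] at hk
    have hsum : ∑ n ∈ Finset.range k, a n * pdoPow (dPrime D f) (uElt D f) n k
        = ∑ n ∈ Finset.range k, b n * pdoPow (dPrime D f) (uElt D f) n k :=
      Finset.sum_congr rfl fun n hn => by rw [ih n (Finset.mem_range.mp hn)]
    rw [hsum] at hk
    have hk2 : a k * (f:R)^k = b k * (f:R)^k := add_left_cancel hk
    have hunit : ((f : R))^k * ((f⁻¹ : Rˣ) : R)^k = 1 := by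
      rw [← mul_pow, Units.mul_inv, one_pow]
    have := congrArg (fun z => z * ((f⁻¹ : Rˣ) : R)^k) hk2
    rwa [mul_assoc, hunit, mul_one, mul_assoc, hunit, mul_one] at this

lemma pdoChange_filtr (D : Derivation ℤ R R) (f : Rˣ) (a : ℕ → R) (i : ℕ)
    (h : ∀ n < i, a n = 0) :
    (∀ n < i, pdoChange D f a n = 0) ∧ pdoChange D f a i = a i * (f : R) ^ i := by
  constructor
  · intro n hn
    rw [pdoChange_apply]
    apply Finset.sum_eq_zero
    intro p hp
    simp only [Finset.mem_range] at hp
    rw [h p (by omega), zero_mul]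
  · rw [pdoChange_apply, Finset.sum_range_succ, pdoPow_diag]
    have hz : ∑ n ∈ Finset.range i, a n * pdoPow (dPrime D f) (uElt D f) n i = 0 :=
      Finset.sum_eq_zero fun n hn => by
        rw [h n (Finset.mem_range.mp hn), zero_mul]
    rw [hz, zero_add]

lemma pdoChange_e1 (D : Derivation ℤ R R) (f : Rˣ) :
    pdoChange D f pdoE1 = uElt D f := by
  have hone : pdoChange D f pdoOne = pdoOne := by
    rw [← pdoScalar_one, pdoChange_scalar]
  calc pdoChange D f pdoE1 = pdoChange D f (pdoMul ⇑D pdoOne pdoE1) := by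
        rw [pdoMul_one_left]
    _ = pdoMul (dPrime D f) (pdoChange D f pdoOne) (uElt D f) := claimC1 D f pdoOne
    _ = pdoMul (dPrime D f) pdoOne (uElt D f) := by rw [hone]
    _ = uElt D f := pdoMul_one_left _ _

end Bij
/-- (i) `u^{*'n}` vanishes in degrees `< n` (so `Φ` is well defined),
`u_0 = 0` and `u_n = (−1)^{n−1}·(∂')^{n−1}(f)` for `n ≥ 1`; (ii) `Φ` is a bijective
ring homomorphism `ΨDO(R,∂)_{≤0} → ΨDO(R,∂')_{≤0}` fixing the scalars `r·e₀`,
sending `e₁` to `u`, and preserving the filtration, with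
`Φ(a)_i = a_i·f^i` on the leading term. -/
theorem pdo_change_of_derivation {R : Type*} [CommRing R] (D : Derivation ℤ R R) (f : Rˣ) :
    (∀ n k : ℕ, k < n → pdoPow (dPrime D f) (uElt D f) n k = 0) ∧
    (uElt D f 0 = 0) ∧
    (∀ n : ℕ, 1 ≤ n → uElt D f n = (-1 : R) ^ (n - 1) * (dPrime D f)^[n - 1] (f : R)) ∧
    Function.Bijective (pdoChange D f) ∧
    (∀ a b : ℕ → R, pdoChange D f (a + b) = pdoChange D f a + pdoChange D f b) ∧
    (∀ a b : ℕ → R,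
      pdoChange D f (pdoMul ⇑D a b) = pdoMul (dPrime D f) (pdoChange D f a) (pdoChange D f b)) ∧
    (∀ r : R, pdoChange D f (pdoScalar r) = pdoScalar r) ∧
    (pdoChange D f pdoE1 = uElt D f) ∧
    (∀ (a : ℕ → R) (i : ℕ), (∀ n < i, a n = 0) →
      (∀ n < i, pdoChange D f a n = 0) ∧ pdoChange D f a i = a i * (f : R) ^ i) := by
  refine ⟨pdoPow_vanish D f, uElt_zero' D f, ?_, ?_, pdoChange_add D f, pdoChange_mul D f,
    pdoChange_scalar D f, pdoChange_e1 D f, fun a i h => pdoChange_filtr D f a i h⟩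
  · intro n hn
    rw [uElt_apply, if_neg (by omega)]
  · exact ⟨pdoChange_injective D f, fun c => ⟨pdoInv D f c, pdoChange_pdoInv D f c⟩⟩
end

section
/- Let K = ℂ((z)) with the derivation ∂ = d/dz, let δ be a natural number, and set w := e₁ * (z^{−δ}·e₀) ∈ ΨDO(K,∂)_{≤0} (the sequence representing (z^{δ}·∂)^{−1} = ∂^{−1}·z^{−δ}). Then for every j ≥ 1 and every k ∈ ℕ, the j-fold product w^{*j} satisfies (w^{*j})_k = 0 for k < j, and z^{k·δ}·(w^{*j})_k ∈ ℂ[[z]]. (This is the lemma that any element of ΨDO(ℂ[[z]], z^{δ}·∂/∂z) of degree ≤ −i has an expansion ∑_{j≥i} a_j·D_{∂/∂z}^{−j} with a_j ∈ z^{−jδ}·ℂ[[z]], which implies that the symbol of such an operator lies in H⁰(C, K(D)^{⊗i}) locally at a point of the divisor D of multiplicity δ.) -/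
/-- The variable `z` of the field `ℂ((z))` of formal Laurent series. -/
noncomputable def zLS : LaurentSeries ℂ := HahnSeries.single 1 1

/-- `f ∈ ℂ[[z]]`, i.e. the Laurent series `f` has no pole at `0`. -/
def memPS (f : LaurentSeries ℂ) : Prop := ∀ n : ℤ, n < 0 → f.coeff n = 0

/-! ### Auxiliary lemmas -/

/-- The coefficient map as an additive monoid hom. -/
def lsCoeffHom (n : ℤ) : LaurentSeries ℂ →+ ℂ where
  toFun f := f.coeff n
  map_zero' := rfl
  map_add' _ _ := rfl

/-- "Order at least `N`". -/
def ordGE (f : LaurentSeries ℂ) (N : ℤ) : Prop := ∀ n : ℤ, n < N → f.coeff n = 0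

lemma ordGE_zero (N : ℤ) : ordGE 0 N := by intro n _; rfl

lemma ordGE_mono {f : LaurentSeries ℂ} {N N' : ℤ} (h : N' ≤ N) (hf : ordGE f N) :
    ordGE f N' := fun n hn => hf n (lt_of_lt_of_le hn h)

lemma ordGE_mul {f g : LaurentSeries ℂ} {A B : ℤ} (hf : ordGE f A) (hg : ordGE g B) :
    ordGE (f * g) (A + B) := by
  intro n hn
  rw [HahnSeries.coeff_mul]
  apply Finset.sum_eq_zero
  intro ij hij
  rw [Finset.mem_addAntidiagonal] at hij
  rcases lt_or_ge ij.1 A with h | h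
  · rw [hf _ h, zero_mul]
  · have : ij.2 < B := by have := hij.2.2; omega
    rw [hg _ this, mul_zero]

lemma ordGE_smul (z : ℤ) {f : LaurentSeries ℂ} {N : ℤ} (hf : ordGE f N) :
    ordGE (z • f) N := by
  intro n hn
  have : (z • f).coeff n = z • f.coeff n := map_zsmul (lsCoeffHom n) z f
  rw [this, hf n hn, smul_zero]

lemma ordGE_sum {ι : Type*} {s : Finset ι} {F : ι → LaurentSeries ℂ} {N : ℤ}
    (h : ∀ i ∈ s, ordGE (F i) N) : ordGE (∑ i ∈ s, F i) N := by
  classical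
  induction s using Finset.induction with
  | empty => simpa using ordGE_zero N
  | @insert x s hx ih =>
    intro n hn
    rw [Finset.sum_insert hx, HahnSeries.coeff_add,
      h _ (Finset.mem_insert_self _ _) n hn,
      ih (fun i hi => h i (Finset.mem_insert_of_mem hi)) n hn, add_zero]

lemma ordGE_single (a : ℤ) (r : ℂ) : ordGE (HahnSeries.single a r) a := by
  intro n hn
  rw [HahnSeries.coeff_single, if_neg hn.ne]

lemma ordGE_one : ordGE 1 0 := by
  have : (1 : LaurentSeries ℂ) = HahnSeries.single 0 1 := rfl
  rw [this]; exact ordGE_single 0 1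

section D
variable (D : LaurentSeries ℂ → LaurentSeries ℂ)
  (hD : ∀ (f : LaurentSeries ℂ) (n : ℤ), (D f).coeff n = ((n + 1 : ℤ) : ℂ) * f.coeff (n + 1))

include hD

lemma D_zero : D 0 = 0 := by
  ext n; rw [hD]; simp [HahnSeries.coeff_zero]

lemma D_iter_zero (m : ℕ) : D^[m] (0 : LaurentSeries ℂ) = 0 := by
  induction m with
  | zero => rfl
  | succ m ih => rw [Function.iterate_succ_apply', ih, D_zero D hD]

lemma ordGE_D {f : LaurentSeries ℂ} {N : ℤ} (hf : ordGE f N) : ordGE (D f) (N - 1) := by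
  intro n hn; rw [hD, hf (n + 1) (by omega), mul_zero]

lemma ordGE_D_nonneg {f : LaurentSeries ℂ} (hf : ordGE f 0) : ordGE (D f) 0 := by
  intro n hn
  rw [hD]
  rcases eq_or_ne n (-1) with h | h
  · subst h; norm_num
  · rw [hf (n + 1) (by omega), mul_zero]

lemma ordGE_D_iter {f : LaurentSeries ℂ} {N : ℤ} (m : ℕ) (hf : ordGE f N) :
    ordGE (D^[m] f) (N - m) := by
  induction m with
  | zero => simpa using hf
  | succ m ih =>
    rw [Function.iterate_succ_apply']
    have := ordGE_D D hD ih
    apply ordGE_mono _ this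
    push_cast; omega

lemma ordGE_D_iter_nonneg {f : LaurentSeries ℂ} (m : ℕ) (hf : ordGE f 0) :
    ordGE (D^[m] f) 0 := by
  induction m with
  | zero => simpa using hf
  | succ m ih => rw [Function.iterate_succ_apply']; exact ordGE_D_nonneg D hD ih

end D

lemma zLS_pow (n : ℕ) : zLS ^ n = HahnSeries.single (n : ℤ) 1 := by
  induction n with
  | zero => rfl
  | succ n ih =>
    rw [pow_succ, ih, zLS, HahnSeries.single_mul_single, one_mul]
    push_cast; ring_nf

lemma zLS_inv : zLS⁻¹ = HahnSeries.single (-1 : ℤ) 1 := by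
  rw [← eq_inv_of_mul_eq_one_left (a := (HahnSeries.single (-1 : ℤ) (1 : ℂ)))]
  rw [zLS, HahnSeries.single_mul_single]; simp

lemma zLS_inv_pow (δ : ℕ) : zLS⁻¹ ^ δ = HahnSeries.single (-(δ : ℤ)) 1 := by
  rw [zLS_inv]
  induction δ with
  | zero => simp
  | succ n ih =>
    rw [pow_succ, ih, HahnSeries.single_mul_single, one_mul]
    push_cast; ring_nf

section W
variable (δ : ℕ) (D : LaurentSeries ℂ → LaurentSeries ℂ)
  (hD : ∀ (f : LaurentSeries ℂ) (n : ℤ), (D f).coeff n = ((n + 1 : ℤ) : ℂ) * f.coeff (n + 1))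

/-- Closed form for `w = e₁ * (z^{-δ}·e₀)` : value at `0`. -/
lemma w_zero : pdoMul D pdoE1 (pdoScalar (zLS⁻¹ ^ δ)) 0 = 0 := by
  simp [pdoMul, pdoE1]

include hD in
/-- Closed form for `w` : value at `k+1`. -/
lemma w_succ (k : ℕ) :
    pdoMul D pdoE1 (pdoScalar (zLS⁻¹ ^ δ)) (k + 1) =
      ((-1 : ℤ) ^ k) • D^[k] (zLS⁻¹ ^ δ) := by
  unfold pdoMul
  rw [Finset.sum_eq_single 1]
  · rw [Finset.sum_eq_single k]
    · have h1 : k + 1 - 1 - k = 0 := by omega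
      have h2 : pdoCoeff 1 k = (-1 : ℤ) ^ k := by
        simp [pdoCoeff, Nat.choose_self]
      rw [h1, h2]
      simp [pdoE1, pdoScalar]
    · intro m hm hne
      have h1 : k + 1 - 1 - m ≠ 0 := by
        simp only [Finset.mem_range] at hm; omega
      have h2 : pdoScalar (zLS⁻¹ ^ δ) (k + 1 - 1 - m) = 0 := if_neg h1
      rw [h2, D_iter_zero D hD, mul_zero, zsmul_zero]
    · intro h
      exfalso; apply h
      simp only [Finset.mem_range]; omega
  · intro n hn hne
    apply Finset.sum_eq_zero
    intro m _
    have : pdoE1 (R := LaurentSeries ℂ) n = 0 := if_neg hne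
    rw [this, zero_mul, zsmul_zero]
  · intro h
    exfalso; apply h
    simp only [Finset.mem_range]; omega

include hD in
/-- Order bound for `w n`. -/
lemma w_ord (n : ℕ) (hn : 1 ≤ n) :
    ordGE (pdoMul D pdoE1 (pdoScalar (zLS⁻¹ ^ δ)) n) (-(δ : ℤ) - (n - 1 : ℕ)) := by
  obtain ⟨k, rfl⟩ := Nat.exists_eq_add_of_le hn
  rw [add_comm, w_succ δ D hD k]
  apply ordGE_smul
  have h0 : ordGE (zLS⁻¹ ^ δ) (-(δ : ℤ)) := by
    rw [zLS_inv_pow]; exact ordGE_single _ _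
  have := ordGE_D_iter D hD k h0
  apply ordGE_mono _ this
  simp

include hD in
/-- Order bound for `w n` in the case `δ = 0`. -/
lemma w_ord0 (n : ℕ) :
    ordGE (pdoMul D pdoE1 (pdoScalar (zLS⁻¹ ^ (0 : ℕ))) n) 0 := by
  rcases n with _ | k
  · rw [w_zero]; exact ordGE_zero 0
  · rw [w_succ 0 D hD k]
    apply ordGE_smul
    apply ordGE_D_iter_nonneg D hD
    rw [pow_zero]
    exact ordGE_one

include hD in
/-- The key invariant, proved for every `j : ℕ`. -/
lemma pdo_key (j : ℕ) :
    (∀ k : ℕ, k < j → pdoPow D (pdoMul D pdoE1 (pdoScalar (zLS⁻¹ ^ δ))) j k = 0) ∧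
    (∀ k : ℕ, ordGE (pdoPow D (pdoMul D pdoE1 (pdoScalar (zLS⁻¹ ^ δ))) j k)
      (-(k * δ : ℕ) : ℤ)) := by
  induction j with
  | zero =>
    constructor
    · intro k hk; omega
    · intro k
      rcases Nat.eq_zero_or_pos k with h | h
      · subst h
        show ordGE (pdoOne 0) _
        simpa [pdoOne] using ordGE_one
      · show ordGE (pdoOne k) _
        have : pdoOne k = (0 : LaurentSeries ℂ) := by simp [pdoOne, h.ne']
        rw [this]; exact ordGE_zero _
  | succ j ih =>
    have term_zero : ∀ k n m : ℕ, n + m ≤ k → k < j + 1 →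
        pdoCoeff n m • (pdoMul D pdoE1 (pdoScalar (zLS⁻¹ ^ δ)) n *
          D^[m] (pdoPow D (pdoMul D pdoE1 (pdoScalar (zLS⁻¹ ^ δ))) j (k - n - m))) = 0 := by
      intro k n m hnm hk
      rcases Nat.eq_zero_or_pos n with h | h
      · subst h; rw [w_zero, zero_mul, zsmul_zero]
      · have hl : k - n - m < j := by omega
        rw [ih.1 _ hl, D_iter_zero D hD, mul_zero, zsmul_zero]
    have term_ord : ∀ k n m : ℕ, n + m ≤ k →
        ordGE (pdoCoeff n m • (pdoMul D pdoE1 (pdoScalar (zLS⁻¹ ^ δ)) n *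
          D^[m] (pdoPow D (pdoMul D pdoE1 (pdoScalar (zLS⁻¹ ^ δ))) j (k - n - m))))
          (-(k * δ : ℕ) : ℤ) := by
      intro k n m hnm
      rcases Nat.eq_zero_or_pos n with h | h
      · subst h; rw [w_zero, zero_mul, zsmul_zero]; exact ordGE_zero _
      · apply ordGE_smul
        have hkl : n + m + (k - n - m) = k := by omega
        rcases Nat.eq_zero_or_pos δ with hδ | hδ
        · subst hδ
          have h1 : ordGE (pdoMul D pdoE1 (pdoScalar (zLS⁻¹ ^ (0 : ℕ))) n) 0 :=
            w_ord0 D hD n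
          have h2 : ordGE (pdoPow D (pdoMul D pdoE1 (pdoScalar (zLS⁻¹ ^ (0 : ℕ)))) j
              (k - n - m)) 0 := by
            simpa using ih.2 (k - n - m)
          have h3 := ordGE_D_iter_nonneg D hD m h2
          have := ordGE_mul h1 h3
          apply ordGE_mono _ this
          simp
        · have h1 : ordGE (pdoMul D pdoE1 (pdoScalar (zLS⁻¹ ^ δ)) n)
              (-(δ : ℤ) - (n - 1 : ℕ)) := w_ord δ D hD n h
          have h2 := ordGE_D_iter D hD m (ih.2 (k - n - m))
          have := ordGE_mul h1 h2
          apply ordGE_mono _ this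
          have hn1 : ((n - 1 : ℕ) : ℤ) = (n : ℤ) - 1 := by
            omega
          rw [hn1]
          have hcast : ((k * δ : ℕ) : ℤ) = (k : ℤ) * δ := by push_cast; ring
          have hcast2 : (((k - n - m) * δ : ℕ) : ℤ) = ((k : ℤ) - n - m) * δ := by
            have : ((k - n - m : ℕ) : ℤ) = (k : ℤ) - n - m := by omega
            push_cast [this]; ring
          rw [hcast, hcast2]
          have hδ1 : (1 : ℤ) ≤ (δ : ℤ) := by exact_mod_cast hδ
          have hn1' : (1 : ℤ) ≤ (n : ℤ) := by exact_mod_cast h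
          have hm0 : (0 : ℤ) ≤ (m : ℤ) := by positivity
          nlinarith [mul_le_mul_of_nonneg_left hδ1 (by linarith : (0:ℤ) ≤ (n:ℤ) - 1 + m)]
    constructor
    · intro k hk
      show pdoMul D _ (pdoPow D _ j) k = 0
      unfold pdoMul
      apply Finset.sum_eq_zero
      intro n hn
      apply Finset.sum_eq_zero
      intro m hm
      simp only [Finset.mem_range] at hn hm
      exact term_zero k n m (by omega) hk
    · intro k
      show ordGE (pdoMul D _ (pdoPow D _ j) k) _
      unfold pdoMul
      apply ordGE_sum
      intro n hn
      apply ordGE_sum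
      intro m hm
      simp only [Finset.mem_range] at hn hm
      exact term_ord k n m (by omega)

end W

/-- for `K = ℂ((z))`, `∂ = d/dz` and `w := e₁ * (z^{−δ}·e₀)`
(representing `(z^δ·∂)⁻¹ = ∂⁻¹·z^{−δ}`), for every `j ≥ 1` the `j`-fold product
`w^{*j}` vanishes in degrees `< j` and satisfies `z^{k·δ}·(w^{*j})_k ∈ ℂ[[z]]`
for every `k`.  (This is the local expansion lemma for
`ΨDO(ℂ[[z]], z^δ·∂/∂z)_{≤ −i}`.) -/
theorem pdo_divisor_expansion (δ : ℕ)
    (D : LaurentSeries ℂ → LaurentSeries ℂ)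
    (hD : ∀ (f : LaurentSeries ℂ) (n : ℤ), (D f).coeff n = ((n + 1 : ℤ) : ℂ) * f.coeff (n + 1)) :
    ∀ j : ℕ, 1 ≤ j →
      (∀ k : ℕ, k < j → pdoPow D (pdoMul D pdoE1 (pdoScalar (zLS⁻¹ ^ δ))) j k = 0) ∧
      (∀ k : ℕ, memPS (zLS ^ (k * δ) *
        pdoPow D (pdoMul D pdoE1 (pdoScalar (zLS⁻¹ ^ δ))) j k)) := by
  intro j _
  obtain ⟨h1, h2⟩ := pdo_key δ D hD j
  refine ⟨h1, fun k => ?_⟩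
  have hz : ordGE (zLS ^ (k * δ)) ((k * δ : ℕ) : ℤ) := by
    rw [zLS_pow]; exact ordGE_single _ _
  have := ordGE_mul hz (h2 k)
  intro n hn
  exact this n (by omega)
end

section
/- Let N ≥ 2 and let φ : ℂ[X_0,…,X_{N−2}] → ℂ[z,t] be the ℂ-algebra homomorphism with φ(X_a) = z^a·t for a = 0,…,N−2. Then the kernel of φ is exactly the ideal I generated by the elements X_a·X_b − X_c·X_d for all a, b, c, d ∈ {0,…,N−2} with a+b = c+d. (Hence the graded algebra A^{(ℙ¹,N∞)} = ⊕_{i≥0} H⁰(ℙ¹, K(N∞)^{⊗i}) is presented by the generators ω_a = z^a dz, a = 0,…,N−2, with relations ω_a ω_b = ω_c ω_d whenever a+b = c+d.) -/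
open MvPolynomial

open MvPolynomial

/-- The ℂ-algebra homomorphism `φ : ℂ[X_0,…,X_{N−2}] → ℂ[z,t]`, `φ(X_a) = z^a·t`
(with `z = X 0` and `t = X 1` in `ℂ[z,t] = MvPolynomial (Fin 2) ℂ`). -/
noncomputable def ratPhi (N : ℕ) :
    MvPolynomial (Fin (N - 1)) ℂ →ₐ[ℂ] MvPolynomial (Fin 2) ℂ :=
  aeval (fun a : Fin (N - 1) => X 0 ^ (a : ℕ) * X 1)
namespace RatPhiKer
variable {n : ℕ}
def relSet (n : ℕ) : Set (MvPolynomial (Fin n) ℂ) :=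
  {p : MvPolynomial (Fin n) ℂ |
    ∃ a b c d : Fin n, (a : ℕ) + (b : ℕ) = (c : ℕ) + (d : ℕ) ∧
      p = X a * X b - X c * X d}
noncomputable def J (n : ℕ) : Ideal (MvPolynomial (Fin n) ℂ) := Ideal.span (relSet n)
def msum (m : Multiset (Fin n)) : ℕ := (m.map (fun a => (a : ℕ))).sum
noncomputable def Xprod (m : Multiset (Fin n)) : MvPolynomial (Fin n) ℂ := (m.map X).prod
def pot (m : Multiset (Fin n)) : ℕ := (m.map (fun a => (n - 1 - (a : ℕ)) * (a : ℕ))).sum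
@[simp] lemma msum_cons (a : Fin n) (m : Multiset (Fin n)) :
    msum (a ::ₘ m) = (a : ℕ) + msum m := by simp [msum]
@[simp] lemma msum_zero : msum (0 : Multiset (Fin n)) = 0 := by simp [msum]
@[simp] lemma msum_add (s t : Multiset (Fin n)) : msum (s + t) = msum s + msum t := by
  simp [msum]
@[simp] lemma Xprod_cons (a : Fin n) (m : Multiset (Fin n)) :
    Xprod (a ::ₘ m) = X a * Xprod m := by simp [Xprod]
@[simp] lemma Xprod_zero : Xprod (0 : Multiset (Fin n)) = 1 := by simp [Xprod]
@[simp] lemma pot_cons (a : Fin n) (m : Multiset (Fin n)) :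
    pot (a ::ₘ m) = (n - 1 - (a : ℕ)) * (a : ℕ) + pot m := by simp [pot]
lemma msum_eq_zero {s : Multiset (Fin n)} (h : ∀ y ∈ s, (y : ℕ) = 0) : msum s = 0 := by
  induction s using Multiset.induction with
  | empty => simp
  | cons a s ih =>
    rw [msum_cons, h a (Multiset.mem_cons_self a s),
      ih (fun y hy => h y (Multiset.mem_cons_of_mem hy))]

lemma mem_le_msum {x : Fin n} {m : Multiset (Fin n)} (hx : x ∈ m) : (x : ℕ) ≤ msum m := by
  rw [← Multiset.cons_erase hx, msum_cons]; omega
lemma potStep {n a b : ℕ} (hb1 : 1 ≤ b) (hba : b ≤ a) (han : a ≤ n - 2) (hn : 3 ≤ n) :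
    (n - 1 - (a + 1)) * (a + 1) + (n - 1 - (b - 1)) * (b - 1)
      < (n - 1 - a) * a + (n - 1 - b) * b := by
  obtain ⟨q, hq⟩ : ∃ q, b = q + 1 := ⟨b - 1, by omega⟩
  obtain ⟨d, hd⟩ : ∃ d, a = q + 1 + d := ⟨a - b, by omega⟩
  obtain ⟨c, hc⟩ : ∃ c, n = q + d + 3 + c := ⟨n - 2 - a, by omega⟩
  subst hq hd hc
  have e1 : q + d + 3 + c - 1 - (q + 1 + d + 1) = c := by omega
  have e2 : q + d + 3 + c - 1 - (q + 1 - 1) = c + 2 + d := by omega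
  have e3 : q + d + 3 + c - 1 - (q + 1 + d) = c + 1 := by omega
  have e4 : q + d + 3 + c - 1 - (q + 1) = c + 1 + d := by omega
  have e5 : q + 1 - 1 = q := by omega
  rw [e1, e2, e3, e4, e5]
  nlinarith [sq_nonneg (q + d + c)]

/-- A balancing move. -/
lemma move {m : Multiset (Fin n)} {a b : Fin n} (ha : a ∈ m) (hb : b ∈ m.erase a)
    (hb1 : 1 ≤ (b : ℕ)) (hba : (b : ℕ) ≤ (a : ℕ)) (han : (a : ℕ) ≤ n - 2) :
    ∃ m₂ : Multiset (Fin n), Multiset.card m₂ = Multiset.card m ∧ msum m₂ = msum m ∧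
      pot m₂ < pot m ∧ Xprod m - Xprod m₂ ∈ J n := by
  have hn : 3 ≤ n := by have := a.isLt; omega
  set rest := (m.erase a).erase b with hrest
  have hm : m = a ::ₘ b ::ₘ rest := by
    rw [hrest, Multiset.cons_erase hb, Multiset.cons_erase ha]
  have ha1 : (a : ℕ) + 1 < n := by omega
  have hb1' : (b : ℕ) - 1 < n := by omega
  set a' : Fin n := ⟨(a : ℕ) + 1, ha1⟩ with ha'
  set b' : Fin n := ⟨(b : ℕ) - 1, hb1'⟩ with hb'
  have hva : (a' : ℕ) = (a : ℕ) + 1 := rfl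
  have hvb : (b' : ℕ) = (b : ℕ) - 1 := rfl
  refine ⟨a' ::ₘ b' ::ₘ rest, ?_, ?_, ?_, ?_⟩
  · rw [hm]; simp only [Multiset.card_cons]
  · rw [hm]; simp only [msum_cons, hva, hvb]; omega
  · rw [hm]; simp only [pot_cons, hva, hvb]
    have := potStep (n := n) (a := (a : ℕ)) (b := (b : ℕ)) hb1 hba han hn
    omega
  · have key : Xprod m - Xprod (a' ::ₘ b' ::ₘ rest)
        = (X a * X b - X a' * X b') * Xprod rest := by
      rw [hm]; simp only [Xprod_cons]; ring
    rw [key]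
    have hgen : (X a * X b - X a' * X b' : MvPolynomial (Fin n) ℂ) ∈ J n := by
      apply Ideal.subset_span
      exact ⟨a, b, a', b', by rw [hva, hvb]; omega, rfl⟩
    exact Ideal.mul_mem_right _ _ hgen

/-- Extraction: from a nonempty multiset one can extract, modulo `J`, the variable
`X e`, `e = min S (n-1)`. -/
lemma extract (k : ℕ) : ∀ m : Multiset (Fin n), pot m ≤ k → m ≠ 0 →
    ∃ (e : Fin n) (m' : Multiset (Fin n)),
      (e : ℕ) = min (msum m) (n - 1) ∧ Multiset.card m' + 1 = Multiset.card m ∧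
      msum m' + (e : ℕ) = msum m ∧ Xprod m - X e * Xprod m' ∈ J n := by
  induction k using Nat.strong_induction_on with
  | _ k ih =>
  intro m hpot hm
  by_cases hc : ∃ e : Fin n, e ∈ m ∧ (e : ℕ) = min (msum m) (n - 1)
  · obtain ⟨e, hem, he⟩ := hc
    have hcd : Multiset.card m ≠ 0 := by
      simp only [ne_eq, Multiset.card_eq_zero]; exact hm
    refine ⟨e, m.erase e, he, ?_, ?_, ?_⟩
    · rw [Multiset.card_erase_of_mem hem, Nat.pred_eq_sub_one]; omega
    · have : msum m = msum (e ::ₘ m.erase e) := by rw [Multiset.cons_erase hem]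
      rw [this, msum_cons]; omega
    · have : Xprod m = X e * Xprod (m.erase e) := by
        conv_lhs => rw [← Multiset.cons_erase hem]
        rw [Xprod_cons]
      rw [this, sub_self]; exact zero_mem _
  · obtain ⟨x, hx⟩ := Multiset.exists_mem_of_ne_zero hm
    have hn1 : 1 ≤ n := x.pos
    set f := m.filter (fun a : Fin n => 1 ≤ (a : ℕ) ∧ (a : ℕ) ≤ n - 2) with hf
    have hmemf : ∀ y : Fin n, y ∈ f ↔ y ∈ m ∧ (1 ≤ (y : ℕ) ∧ (y : ℕ) ≤ n - 2) := by
      intro y; rw [hf, Multiset.mem_filter]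
    have hvn1 : ∀ y : Fin n, y ∈ m → (y : ℕ) ≠ n - 1 := by
      intro y hy hyv
      exact hc ⟨y, hy, by have := mem_le_msum hy; omega⟩
    have hout : ∀ y : Fin n, y ∈ m → y ∉ f → (y : ℕ) = 0 := by
      intro y hy hyf
      have hyf' : ¬(1 ≤ (y : ℕ) ∧ (y : ℕ) ≤ n - 2) := fun h => hyf ((hmemf y).mpr ⟨hy, h⟩)
      have h1 := hvn1 y hy
      have h2 := y.isLt
      omega
    have hsum : msum f = msum m := by
      have hsplit : f + m.filter (fun a : Fin n => ¬(1 ≤ (a : ℕ) ∧ (a : ℕ) ≤ n - 2)) = m :=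
        Multiset.filter_add_not _ m
      have hzero : msum (m.filter (fun a : Fin n => ¬(1 ≤ (a : ℕ) ∧ (a : ℕ) ≤ n - 2))) = 0 := by
        apply msum_eq_zero
        intro y hy
        have hy1 := Multiset.mem_of_mem_filter hy
        have hy2 := (Multiset.mem_filter.mp hy).2
        exact hout y hy1 (fun hyf => hy2 ((hmemf y).mp hyf).2)
      have h2 : msum (f + m.filter (fun a : Fin n => ¬(1 ≤ (a : ℕ) ∧ (a : ℕ) ≤ n - 2))) = msum m := by
        rw [hsplit]
      rwa [msum_add, hzero, add_zero] at h2
    have hf2 : 2 ≤ Multiset.card f := by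
      by_contra h
      push_neg at h
      interval_cases hcf : Multiset.card f
      · have hf0 : f = 0 := Multiset.card_eq_zero.mp hcf
        have hm0 : msum m = 0 := by
          rw [← hsum, hf0]; rfl
        exact hc ⟨x, hx, by rw [hout x hx (by rw [hf0]; simp), hm0]; simp⟩
      · obtain ⟨a, hfa⟩ := Multiset.card_eq_one.mp hcf
        have haf : a ∈ f := by rw [hfa]; exact Multiset.mem_singleton_self a
        have hprops := (hmemf a).mp haf
        have hmsum : msum m = (a : ℕ) := by rw [← hsum, hfa]; simp [msum]
        exact hc ⟨a, hprops.1, by omega⟩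
    -- pick the two elements
    have hfne : f ≠ 0 := by
      intro h0; rw [h0] at hf2; simp at hf2
    obtain ⟨a, haf⟩ := Multiset.exists_mem_of_ne_zero hfne
    have hbne : f.erase a ≠ 0 := by
      intro h0
      have := Multiset.card_erase_of_mem haf
      rw [h0] at this
      simp at this
      omega
    obtain ⟨b, hbf⟩ := Multiset.exists_mem_of_ne_zero hbne
    have hpa := (hmemf a).mp haf
    have hpb := (hmemf b).mp (Multiset.mem_of_mem_erase hbf)
    have hbm' : b ∈ m.erase a := by
      have : f.erase a ≤ m.erase a := Multiset.erase_le_erase a (Multiset.filter_le _ m)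
      exact Multiset.mem_of_le this hbf
    -- two symmetric cases
    have main : ∃ m₂ : Multiset (Fin n), Multiset.card m₂ = Multiset.card m ∧
        msum m₂ = msum m ∧ pot m₂ < pot m ∧ Xprod m - Xprod m₂ ∈ J n := by
      rcases le_total (b : ℕ) (a : ℕ) with hba | hab
      · exact move hpa.1 hbm' hpb.2.1 hba hpa.2.2
      · have ham' : a ∈ m.erase b := by
          by_cases hab' : a = b
          · rw [hab']; rw [hab'] at hbm'; exact hbm'
          · exact (Multiset.mem_erase_of_ne hab').mpr hpa.1
        exact move hpb.1 ham' hpa.2.1 hab hpb.2.2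
    obtain ⟨m₂, hcard₂, hmsum₂, hpot₂, hJ₂⟩ := main
    have hm₂ne : m₂ ≠ 0 := by
      intro h0; rw [h0] at hcard₂; simp at hcard₂
      exact hm (Multiset.card_eq_zero.mp hcard₂.symm)
    obtain ⟨e, m', he, hcard', hmsum', hJ'⟩ :=
      ih (pot m₂) (lt_of_lt_of_le hpot₂ hpot) m₂ le_rfl hm₂ne
    refine ⟨e, m', by rw [he, hmsum₂], by omega, by omega, ?_⟩
    have : Xprod m - X e * Xprod m' = (Xprod m - Xprod m₂) + (Xprod m₂ - X e * Xprod m') := by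
      ring
    rw [this]
    exact add_mem hJ₂ hJ'

/-- Monomials with equal degree and weight are congruent mod `J`. -/
lemma prod_sub_prod_mem : ∀ (k : ℕ) (m m' : Multiset (Fin n)), Multiset.card m = k →
    Multiset.card m' = Multiset.card m → msum m' = msum m →
    Xprod m - Xprod m' ∈ J n := by
  intro k
  induction k with
  | zero =>
    intro m m' hm hm' _
    rw [Multiset.card_eq_zero.mp hm, Multiset.card_eq_zero.mp (by rw [hm', hm] : Multiset.card m' = 0)]
    simp
  | succ k ih =>
    intro m m' hm hm' hsum
    have hmne : m ≠ 0 := by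
      intro h; rw [h] at hm; simp at hm
    have hmne' : m' ≠ 0 := by
      intro h; rw [h] at hm'; rw [hm] at hm'; simp at hm'
    obtain ⟨e₁, m₁, he₁, hc₁, hs₁, hJ₁⟩ := extract (pot m) m le_rfl hmne
    obtain ⟨e₂, m₂, he₂, hc₂, hs₂, hJ₂⟩ := extract (pot m') m' le_rfl hmne'
    have hee : e₁ = e₂ := by
      apply Fin.val_injective
      rw [he₁, he₂, hsum]
    subst hee
    have hmid : X e₁ * Xprod m₁ - X e₁ * Xprod m₂ ∈ J n := by
      have h := ih m₁ m₂ (by omega) (by omega) (by omega)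
      have : X e₁ * Xprod m₁ - X e₁ * Xprod m₂ = X e₁ * (Xprod m₁ - Xprod m₂) := by ring
      rw [this]
      exact Ideal.mul_mem_left _ _ h
    have hkey : Xprod m - Xprod m' =
        (Xprod m - X e₁ * Xprod m₁) + (X e₁ * Xprod m₁ - X e₁ * Xprod m₂)
          - (Xprod m' - X e₁ * Xprod m₂) := by ring
    rw [hkey]
    exact sub_mem (add_mem hJ₁ hmid) hJ₂

lemma Xprod_toFinsupp (μ : Multiset (Fin n)) :
    Xprod μ = monomial (Multiset.toFinsupp μ) (1 : ℂ) := by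
  induction μ using Multiset.induction with
  | empty => simp [Multiset.toFinsupp_zero, monomial_zero']
  | cons a μ ih =>
    rw [Xprod_cons, ih, ← Multiset.singleton_add, Multiset.toFinsupp_add,
      Multiset.toFinsupp_singleton, X, monomial_mul, one_mul]

lemma monomial_one_eq (m : Fin n →₀ ℕ) :
    monomial m (1 : ℂ) = Xprod (Finsupp.toMultiset m) := by
  rw [Xprod_toFinsupp, Finsupp.toMultiset_toFinsupp]


noncomputable def phi (n : ℕ) : MvPolynomial (Fin n) ℂ →ₐ[ℂ] MvPolynomial (Fin 2) ℂ :=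
  aeval (fun a : Fin n => X 0 ^ (a : ℕ) * X 1)

lemma phi_Xprod (μ : Multiset (Fin n)) :
    phi n (Xprod μ) = X 0 ^ (msum μ) * X 1 ^ (Multiset.card μ) := by
  induction μ using Multiset.induction with
  | empty => simp
  | cons a μ ih =>
    rw [Xprod_cons, map_mul, ih, msum_cons, Multiset.card_cons]
    rw [phi, aeval_X]
    rw [pow_add, pow_succ]
    ring

/-- the image degree profile of a monomial -/
noncomputable def wd (m : Fin n →₀ ℕ) : Fin 2 →₀ ℕ :=
  Finsupp.single 0 (msum (Finsupp.toMultiset m)) +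
    Finsupp.single 1 (Multiset.card (Finsupp.toMultiset m))

lemma phi_monomial (m : Fin n →₀ ℕ) (c : ℂ) :
    phi n (monomial m c) = monomial (wd m) c := by
  have h1 : monomial m c = C c * monomial m 1 := by
    rw [C_mul_monomial, mul_one]
  rw [h1, monomial_one_eq, map_mul, phi_Xprod]
  have hC : phi n (C c) = C c := by
    simp [phi, algHom_C]
  rw [hC, X_pow_eq_monomial, X_pow_eq_monomial, ← mul_assoc, C_mul_monomial, monomial_mul, wd]
  ring_nf

lemma wd_inj {m m' : Fin n →₀ ℕ} (h : wd m = wd m') :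
    msum (Finsupp.toMultiset m) = msum (Finsupp.toMultiset m') ∧
      Multiset.card (Finsupp.toMultiset m) = Multiset.card (Finsupp.toMultiset m') := by
  constructor
  · have := congrArg (fun g : Fin 2 →₀ ℕ => g 0) h
    simpa [wd, Finsupp.single_apply] using this
  · have := congrArg (fun g : Fin 2 →₀ ℕ => g 1) h
    simpa [wd, Finsupp.single_apply] using this

lemma J_le_ker : J n ≤ RingHom.ker (phi n).toRingHom := by
  rw [J, Ideal.span_le]
  rintro p ⟨a, b, c, d, habcd, rfl⟩
  rw [SetLike.mem_coe, RingHom.mem_ker]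
  show phi n (X a * X b - X c * X d) = 0
  have expand : ∀ u v : Fin n, phi n (X u * X v) =
      X 0 ^ ((u : ℕ) + (v : ℕ)) * (X 1 : MvPolynomial (Fin 2) ℂ) ^ 2 := by
    intro u v
    rw [map_mul, phi, aeval_X, aeval_X, pow_add]
    ring
  rw [map_sub, expand, expand, habcd, sub_self]


lemma monomial_sub_monomial_mem {m₀ m₁ : Fin n →₀ ℕ} (h : wd m₁ = wd m₀) (c : ℂ) :
    monomial m₀ c - monomial m₁ c ∈ J n := by
  obtain ⟨hs, hc⟩ := wd_inj h
  have key : Xprod (Finsupp.toMultiset m₀) - Xprod (Finsupp.toMultiset m₁) ∈ J n :=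
    prod_sub_prod_mem (Multiset.card (Finsupp.toMultiset m₀)) _ _ rfl hc hs
  have h1 : monomial m₀ c - monomial m₁ c
      = C c * (Xprod (Finsupp.toMultiset m₀) - Xprod (Finsupp.toMultiset m₁)) := by
    rw [mul_sub, ← monomial_one_eq, ← monomial_one_eq, C_mul_monomial, C_mul_monomial, mul_one]
  rw [h1]
  exact Ideal.mul_mem_left _ _ key

lemma ker_le_J : RingHom.ker (phi n).toRingHom ≤ J n := by
  suffices H : ∀ (k : ℕ) (p : MvPolynomial (Fin n) ℂ), p.support.card ≤ k →
      phi n p = 0 → p ∈ J n by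
    intro p hp
    exact H p.support.card p le_rfl hp
  intro k
  induction k with
  | zero =>
    intro p hcard _
    have : p.support = ∅ := Finset.card_eq_zero.mp (Nat.le_zero.mp hcard)
    rw [support_eq_empty.mp this]
    exact zero_mem _
  | succ k ih =>
    intro p hcard hker
    by_cases hp0 : p = 0
    · rw [hp0]; exact zero_mem _
    obtain ⟨m₀, hm₀⟩ := support_nonempty.mpr hp0
    -- the coefficient sum over the fiber of wd m₀ vanishes
    have hsum : ∑ m ∈ p.support, (if wd m = wd m₀ then coeff m p else 0) = 0 := by
      have h1 : coeff (wd m₀) (phi n p) = 0 := by rw [hker]; simp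
      have h2 : phi n p = ∑ m ∈ p.support, monomial (wd m) (coeff m p) := by
        conv_lhs => rw [p.as_sum]
        rw [map_sum]
        exact Finset.sum_congr rfl (fun m _ => phi_monomial m _)
      calc ∑ m ∈ p.support, (if wd m = wd m₀ then coeff m p else 0)
          = ∑ m ∈ p.support, coeff (wd m₀) (monomial (wd m) (coeff m p)) :=
            Finset.sum_congr rfl (fun m _ => (coeff_monomial _ _ _).symm)
        _ = coeff (wd m₀) (phi n p) := by rw [h2, coeff_sum]
        _ = 0 := h1
    have hex : ∃ m₁ ∈ p.support, m₁ ≠ m₀ ∧ wd m₁ = wd m₀ := by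
      by_contra h
      push_neg at h
      rw [Finset.sum_eq_single_of_mem m₀ hm₀
        (fun b hb hbne => if_neg (h b hb hbne)), if_pos rfl] at hsum
      exact (mem_support_iff.mp hm₀) hsum
    obtain ⟨m₁, hm₁s, hne, hwd⟩ := hex
    set c₀ := coeff m₀ p with hc₀
    set r : MvPolynomial (Fin n) ℂ := monomial m₀ c₀ - monomial m₁ c₀ with hr
    have hrJ : r ∈ J n := monomial_sub_monomial_mem hwd c₀
    set p' := p - r with hp'
    have hcoeffr : ∀ m, coeff m r =
        (if m₀ = m then c₀ else 0) - (if m₁ = m then c₀ else 0) := by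
      intro m
      rw [hr, coeff_sub, coeff_monomial, coeff_monomial]
    have hsupp : p'.support ⊆ p.support.erase m₀ := by
      intro m hm
      have hcm : coeff m p' ≠ 0 := mem_support_iff.mp hm
      rw [hp', coeff_sub, hcoeffr] at hcm
      by_cases hmm₀ : m = m₀
      · exfalso
        apply hcm
        rw [hmm₀, if_pos rfl, if_neg hne, ← hc₀]
        ring
      · rw [Finset.mem_erase]
        refine ⟨hmm₀, ?_⟩
        rw [mem_support_iff]
        intro hmp
        apply hcm
        rw [hmp, if_neg (fun h => hmm₀ h.symm)]
        by_cases hmm₁ : m₁ = m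
        · rw [if_pos hmm₁]
          rw [← hmm₁] at hmp
          exact absurd hmp (mem_support_iff.mp hm₁s)
        · rw [if_neg hmm₁]; ring
    have hcard' : p'.support.card ≤ k := by
      have h1 : (p.support.erase m₀).card < p.support.card := Finset.card_erase_lt_of_mem hm₀
      have h2 := Finset.card_le_card hsupp
      omega
    have hker' : phi n p' = 0 := by
      have hrk : phi n r = 0 := by
        have := J_le_ker hrJ
        rwa [RingHom.mem_ker] at this
      rw [hp', map_sub, hker, hrk, sub_zero]
    have hp'J : p' ∈ J n := ih p' hcard' hker'
    have : p = p' + r := by rw [hp']; ring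
    rw [this]
    exact add_mem hp'J hrJ

lemma ker_eq_J : RingHom.ker (phi n).toRingHom = J n :=
  le_antisymm ker_le_J J_le_ker

end RatPhiKer

/-- the kernel of `φ` is the ideal generated by the elements
`X_a·X_b − X_c·X_d` with `a+b = c+d`.  (Hence the graded algebra `A^{(ℙ¹,N∞)}` is
presented by the generators `ω_a = z^a dz` with relations `ω_aω_b = ω_cω_d` for
`a+b = c+d`.) -/
theorem ratPhi_ker (N : ℕ) (hN : 2 ≤ N) :
    RingHom.ker (ratPhi N).toRingHom =
      Ideal.span {p : MvPolynomial (Fin (N - 1)) ℂ |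
        ∃ a b c d : Fin (N - 1), (a : ℕ) + (b : ℕ) = (c : ℕ) + (d : ℕ) ∧
          p = X a * X b - X c * X d} := by
  exact RatPhiKer.ker_eq_J
end

section
/- Let N ≥ 2 and let I ⊂ ℂ[X_0,…,X_{N−2}] be the ideal generated by all X_aX_b − X_cX_d with a+b = c+d (a,b,c,d ∈ {0,…,N−2}). Then for every i ≥ 1 and every monomial M of total degree i in X_0,…,X_{N−2}, there exist natural numbers α, β with α + β = i − 1 and an index k ∈ {0,…,N−2} such that M − X_0^{α}·X_{N−2}^{β}·X_k belongs to I. (This is the statement that the elements t_0^{α} t_{N−2}^{β} t_k, together with t_{N−2}^i, form a generating family of the degree-i component of the algebra with relations t_a t_b = t_c t_d for a+b = c+d.) -/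
open MvPolynomial

/-- modulo the ideal `I` generated by the `X_aX_b − X_cX_d` with
`a+b = c+d`, every monomial of total degree `i ≥ 1` is congruent to a monomial
`X_0^α·X_{N−2}^β·X_k` with `α + β = i − 1`.  (So the elements
`t_0^α t_{N−2}^β t_k`, together with `t_{N−2}^i`, generate the degree-`i`
component of `Ã(N)`.) -/
theorem monomial_reduction (N : ℕ) (hN : 2 ≤ N) (i : ℕ) (hi : 1 ≤ i)
    (m : Fin (N - 1) →₀ ℕ) (hm : (m.sum fun _ e => e) = i) :
    ∃ (α β : ℕ) (k : Fin (N - 1)), α + β = i - 1 ∧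
      (monomial m (1 : ℂ)) -
          X (⟨0, by omega⟩ : Fin (N - 1)) ^ α *
            X (⟨N - 2, by omega⟩ : Fin (N - 1)) ^ β * X k ∈
        Ideal.span {p : MvPolynomial (Fin (N - 1)) ℂ |
          ∃ a b c d : Fin (N - 1), (a : ℕ) + (b : ℕ) = (c : ℕ) + (d : ℕ) ∧
            p = X a * X b - X c * X d} := by
  set I := Ideal.span {p : MvPolynomial (Fin (N - 1)) ℂ |
          ∃ a b c d : Fin (N - 1), (a : ℕ) + (b : ℕ) = (c : ℕ) + (d : ℕ) ∧
            p = X a * X b - X c * X d} with hI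
  have hgen : ∀ a b c d : Fin (N - 1), (a : ℕ) + (b : ℕ) = (c : ℕ) + (d : ℕ) →
      X a * X b - X c * X d ∈ I := fun a b c d h =>
    Ideal.subset_span ⟨a, b, c, d, h, rfl⟩
  clear_value I
  induction i generalizing m with
  | zero => omega
  | succ n ih =>
    -- find a variable in the support
    have hne : m ≠ 0 := by
      intro h; rw [h] at hm; simp [Finsupp.sum_zero_index] at hm
    obtain ⟨j, hj⟩ : ∃ j, m j ≠ 0 := by
      by_contra h; push_neg at h
      exact hne (Finsupp.ext fun a => h a)
    set m' : Fin (N - 1) →₀ ℕ := m - Finsupp.single j 1 with hm'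
    have hsplit : m' + Finsupp.single j 1 = m := by
      ext a
      simp only [hm', Finsupp.add_apply, Finsupp.sub_apply, Finsupp.single_apply]
      by_cases ha : j = a
      · subst ha; simpa using Nat.sub_add_cancel (Nat.one_le_iff_ne_zero.mpr hj)
      · simp [ha]
    have hmul : monomial m (1 : ℂ) = monomial m' 1 * X j := by
      rw [X, monomial_mul, mul_one, hsplit]
    have hsum : (m'.sum fun _ e => e) = n := by
      have := Finsupp.sum_add_index' (f := m') (g := Finsupp.single j 1)
        (h := fun (_ : Fin (N-1)) (e : ℕ) => e) (fun _ => rfl) (fun _ _ _ => rfl)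
      rw [hsplit] at this
      rw [hm] at this
      simp [Finsupp.sum_single_index] at this
      omega
    rcases Nat.eq_zero_or_pos n with hn | hn
    · -- degree 1 : m = single j 1
      have hm'0 : m' = 0 := by
        ext a
        by_contra h
        have : 1 ≤ m'.sum fun _ e => e := by
          rw [Finsupp.sum]
          have ha : a ∈ m'.support := Finsupp.mem_support_iff.mpr h
          calc 1 ≤ m' a := Nat.one_le_iff_ne_zero.mpr h
          _ ≤ _ := Finset.single_le_sum (fun _ _ => Nat.zero_le _) ha
        omega
      refine ⟨0, 0, j, by omega, ?_⟩
      rw [hmul, hm'0]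
      simp
    · obtain ⟨α, β, k, hαβ, hmem⟩ := ih hn m' hsum
      by_cases hk : (k : ℕ) + (j : ℕ) ≤ N - 2
      · refine ⟨α + 1, β, ⟨(k : ℕ) + (j : ℕ), by omega⟩, by omega, ?_⟩
        have hrel := hgen k j ⟨0, by omega⟩ ⟨(k : ℕ) + (j : ℕ), by omega⟩ (by simp)
        have key : monomial m (1 : ℂ) -
            X (⟨0, by omega⟩ : Fin (N - 1)) ^ (α + 1) *
              X (⟨N - 2, by omega⟩ : Fin (N - 1)) ^ β *
              X (⟨(k : ℕ) + (j : ℕ), by omega⟩ : Fin (N - 1)) =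
            (monomial m' (1 : ℂ) -
              X (⟨0, by omega⟩ : Fin (N - 1)) ^ α *
                X (⟨N - 2, by omega⟩ : Fin (N - 1)) ^ β * X k) * X j +
            X (⟨0, by omega⟩ : Fin (N - 1)) ^ α *
              X (⟨N - 2, by omega⟩ : Fin (N - 1)) ^ β *
              (X k * X j - X (⟨0, by omega⟩ : Fin (N - 1)) *
                X (⟨(k : ℕ) + (j : ℕ), by omega⟩ : Fin (N - 1))) := by
          rw [hmul]; ring
        rw [key]
        exact I.add_mem (I.mul_mem_right _ hmem) (I.mul_mem_left _ hrel)
      · have hk2 : (k : ℕ) + (j : ℕ) - (N - 2) ≤ N - 2 := by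
          have := k.isLt; have := j.isLt; omega
        refine ⟨α, β + 1, ⟨(k : ℕ) + (j : ℕ) - (N - 2), by omega⟩, by omega, ?_⟩
        have hrel := hgen k j ⟨N - 2, by omega⟩
          ⟨(k : ℕ) + (j : ℕ) - (N - 2), by omega⟩ (by simp; omega)
        have key : monomial m (1 : ℂ) -
            X (⟨0, by omega⟩ : Fin (N - 1)) ^ α *
              X (⟨N - 2, by omega⟩ : Fin (N - 1)) ^ (β + 1) *
              X (⟨(k : ℕ) + (j : ℕ) - (N - 2), by omega⟩ : Fin (N - 1)) =
            (monomial m' (1 : ℂ) -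
              X (⟨0, by omega⟩ : Fin (N - 1)) ^ α *
                X (⟨N - 2, by omega⟩ : Fin (N - 1)) ^ β * X k) * X j +
            X (⟨0, by omega⟩ : Fin (N - 1)) ^ α *
              X (⟨N - 2, by omega⟩ : Fin (N - 1)) ^ β *
              (X k * X j - X (⟨N - 2, by omega⟩ : Fin (N - 1)) *
                X (⟨(k : ℕ) + (j : ℕ) - (N - 2), by omega⟩ : Fin (N - 1))) := by
          rw [hmul]; ring
        rw [key]
        exact I.add_mem (I.mul_mem_right _ hmem) (I.mul_mem_left _ hrel)
end

section
/- Let N ≥ 2 and let I ⊂ ℂ[X_0,…,X_{N−2}] be the ideal generated by all X_aX_b − X_cX_d with a+b = c+d (a,b,c,d ∈ {0,…,N−2}). Then for every natural number i, the degree-i homogeneous component of the graded quotient ℂ[X_0,…,X_{N−2}]/I has ℂ-dimension i(N−2) + 1. (Equivalently, the quotient is isomorphic as a graded algebra to A^{(ℙ¹,N∞)}, whose degree-i component is the space of polynomials of degree ≤ i(N−2).) -/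
open MvPolynomial

/-- The homogeneous ideal `I ⊂ ℂ[X_0,…,X_{N−2}]` generated by the elements
`X_aX_b − X_cX_d` with `a+b = c+d`. -/
noncomputable def relIdeal (N : ℕ) : Ideal (MvPolynomial (Fin (N - 1)) ℂ) :=
  Ideal.span {p : MvPolynomial (Fin (N - 1)) ℂ |
    ∃ a b c d : Fin (N - 1), (a : ℕ) + (b : ℕ) = (c : ℕ) + (d : ℕ) ∧
      p = X a * X b - X c * X d}

namespace RelAux

variable {k : ℕ}

/-- weighted sum of a multiset of indices -/
def wsum (M : Multiset (Fin (k+1))) : ℕ := (M.map Fin.val).sum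

/-- product of variables -/
noncomputable def P (M : Multiset (Fin (k+1))) : MvPolynomial (Fin (k+1)) ℂ :=
  (M.map X).prod

noncomputable def qmk (k : ℕ) :
    MvPolynomial (Fin (k+1)) ℂ →+* MvPolynomial (Fin (k+1)) ℂ ⧸ relIdeal (k+2) :=
  Ideal.Quotient.mk (relIdeal (k+2))

@[simp] lemma wsum_zero : wsum (0 : Multiset (Fin (k+1))) = 0 := rfl

@[simp] lemma wsum_cons (a : Fin (k+1)) (M : Multiset (Fin (k+1))) :
    wsum (a ::ₘ M) = a.val + wsum M := by simp [wsum]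

@[simp] lemma P_zero : P (0 : Multiset (Fin (k+1))) = 1 := rfl

@[simp] lemma P_cons (a : Fin (k+1)) (M : Multiset (Fin (k+1))) :
    P (a ::ₘ M) = X a * P M := by simp [P]

lemma exchange {a b c d : Fin (k+1)} (h : a.val + b.val = c.val + d.val) :
    qmk k (X a * X b) = qmk k (X c * X d) := by
  rw [qmk, Ideal.Quotient.eq]
  exact Ideal.subset_span ⟨a, b, c, d, h, rfl⟩

lemma exchange_cons {a b c d : Fin (k+1)} (h : a.val + b.val = c.val + d.val)
    (M : Multiset (Fin (k+1))) :
    qmk k (P (a ::ₘ b ::ₘ M)) = qmk k (P (c ::ₘ d ::ₘ M)) := by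
  simp only [P_cons, ← mul_assoc]
  rw [map_mul (qmk k) (X a * X b) (P M), map_mul (qmk k) (X c * X d) (P M), exchange h]

end RelAux

namespace RelAux

variable {k : ℕ}

lemma wsum_erase {a : Fin (k+1)} {M : Multiset (Fin (k+1))} (ha : a ∈ M) :
    wsum M = a.val + wsum (M.erase a) := by
  conv_lhs => rw [← Multiset.cons_erase ha]
  simp

lemma exists_pos {M : Multiset (Fin (k+1))} (h : wsum M ≠ 0) :
    ∃ b ∈ M, b.val ≠ 0 := by
  by_contra hc
  push_neg at hc
  apply h
  rw [wsum, Multiset.sum_eq_zero_iff]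
  intro x hx
  obtain ⟨b, hb, rfl⟩ := Multiset.mem_map.mp hx
  exact hc b hb

lemma peel : ∀ (μ : ℕ) (M : Multiset (Fin (k+1))), M ≠ 0 →
    min (wsum M) k ≤ (M.map Fin.val).sup + μ →
    ∃ (M₂ : Multiset (Fin (k+1))) (t : Fin (k+1)), t.val = min (wsum M) k ∧
      Multiset.card M₂ = Multiset.card M - 1 ∧
      wsum M₂ = wsum M - min (wsum M) k ∧
      qmk k (P M) = qmk k (X t * P M₂) := by
  intro μ
  induction μ with
  | zero =>
    intro M hM hμ
    obtain ⟨a, haF, hamax⟩ := Finset.exists_max_image M.toFinset Fin.val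
      (by rwa [Multiset.toFinset_nonempty])
    have haM : a ∈ M := Multiset.mem_toFinset.mp haF
    have hsup : (M.map Fin.val).sup ≤ a.val := by
      rw [Multiset.sup_le]
      intro b hb
      obtain ⟨c, hc, rfl⟩ := Multiset.mem_map.mp hb
      exact hamax c (Multiset.mem_toFinset.mpr hc)
    have hs := wsum_erase haM
    have hat : a.val = min (wsum M) k := by
      have := a.isLt; omega
    refine ⟨M.erase a, a, hat, Multiset.card_erase_of_mem haM, by omega, ?_⟩
    conv_lhs => rw [← Multiset.cons_erase haM]
    rw [P_cons]
  | succ μ ih =>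
    intro M hM hμ
    obtain ⟨a, haF, hamax⟩ := Finset.exists_max_image M.toFinset Fin.val
      (by rwa [Multiset.toFinset_nonempty])
    have haM : a ∈ M := Multiset.mem_toFinset.mp haF
    have hsup : (M.map Fin.val).sup ≤ a.val := by
      rw [Multiset.sup_le]
      intro b hb
      obtain ⟨c, hc, rfl⟩ := Multiset.mem_map.mp hb
      exact hamax c (Multiset.mem_toFinset.mpr hc)
    have hs := wsum_erase haM
    by_cases hat : a.val = min (wsum M) k
    · refine ⟨M.erase a, a, hat, Multiset.card_erase_of_mem haM, by omega, ?_⟩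
      conv_lhs => rw [← Multiset.cons_erase haM]
      rw [P_cons]
    · have halt : a.val < min (wsum M) k := by
        have := a.isLt; omega
      have hpos : wsum (M.erase a) ≠ 0 := by omega
      obtain ⟨b, hbE, hbpos⟩ := exists_pos hpos
      have hbM : b ∈ M := Multiset.mem_of_mem_erase hbE
      have hba : b.val ≤ a.val := hamax b (Multiset.mem_toFinset.mpr hbM)
      set R := (M.erase a).erase b with hR
      have hMsplit : M = a ::ₘ b ::ₘ R := by
        rw [hR, Multiset.cons_erase hbE, Multiset.cons_erase haM]
      set a' : Fin (k+1) := ⟨a.val + 1, by omega⟩ with ha'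
      set b' : Fin (k+1) := ⟨b.val - 1, by omega⟩ with hb'
      set M' := a' ::ₘ b' ::ₘ R with hM'
      have hw' : wsum M' = wsum M := by
        rw [hMsplit, hM']; simp [ha', hb']; omega
      have hc' : Multiset.card M' = Multiset.card M := by
        rw [hMsplit, hM']; simp
      have hq : qmk k (P M) = qmk k (P M') := by
        rw [hMsplit, hM']
        exact exchange_cons (by simp [ha', hb']; omega) R
      have hsup' : a.val + 1 ≤ (M'.map Fin.val).sup := by
        have : a'.val ∈ M'.map Fin.val := Multiset.mem_map_of_mem _ (Multiset.mem_cons_self _ _)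
        exact Multiset.le_sup this
      have hM'ne : M' ≠ 0 := by rw [hM']; exact Multiset.cons_ne_zero
      obtain ⟨M₂, t, ht, h1, h2, h3⟩ := ih M' hM'ne (by rw [hw']; omega)
      exact ⟨M₂, t, by omega, by omega, by omega, by rw [hq, h3]⟩

end RelAux

namespace RelAux

variable {k : ℕ}

/-- greedy canonical multiset of size `i` and weighted sum `s` -/
def canon (k : ℕ) : ℕ → ℕ → Multiset (Fin (k+1))
  | 0, _ => 0
  | (i+1), s => (⟨min s k, Nat.lt_succ_of_le (min_le_right _ _)⟩ : Fin (k+1)) ::ₘ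
      canon k i (s - min s k)

@[simp] lemma card_canon (i s : ℕ) : Multiset.card (canon k i s) = i := by
  induction i generalizing s with
  | zero => rfl
  | succ i ih => simp [canon, ih]

lemma wsum_canon {i s : ℕ} (h : s ≤ i * k) : wsum (canon k i s) = s := by
  induction i generalizing s with
  | zero => simp at h; simp [canon, h]
  | succ i ih =>
    rw [Nat.succ_mul] at h
    rw [canon, wsum_cons, ih (by omega)]
    simp only [Fin.val_mk]
    omega

lemma wsum_le (M : Multiset (Fin (k+1))) : wsum M ≤ Multiset.card M * k := by
  induction M using Multiset.induction with
  | empty => simp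
  | cons a M ih =>
    rw [wsum_cons, Multiset.card_cons, Nat.succ_mul]
    have := a.isLt
    omega

lemma qmk_P_canon : ∀ (i : ℕ) (M : Multiset (Fin (k+1))), Multiset.card M = i →
    qmk k (P M) = qmk k (P (canon k i (wsum M))) := by
  intro i
  induction i with
  | zero =>
    intro M hM
    rw [Multiset.card_eq_zero] at hM
    subst hM; rfl
  | succ i ih =>
    intro M hM
    have hMne : M ≠ 0 := by
      intro h; rw [h] at hM; simp at hM
    obtain ⟨M₂, t, ht, h1, h2, h3⟩ := peel (min (wsum M) k) M hMne (by omega)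
    rw [hM] at h1
    simp only [Nat.add_sub_cancel] at h1
    rw [h3, canon, P_cons]
    have htt : t = (⟨min (wsum M) k, Nat.lt_succ_of_le (min_le_right _ _)⟩ : Fin (k+1)) :=
      Fin.ext ht
    rw [htt, map_mul, map_mul, ih M₂ h1, h2]

end RelAux

namespace RelAux

variable {k : ℕ}

lemma P_eq_monomial (M : Multiset (Fin (k+1))) :
    P M = monomial (Multiset.toFinsupp M) 1 := by
  induction M using Multiset.induction with
  | empty => simp [monomial_zero']
  | cons a M ih =>
    rw [P_cons, ih, show (X a : MvPolynomial (Fin (k+1)) ℂ) = monomial (Finsupp.single a 1) 1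
      from rfl, monomial_mul, one_mul]
    congr 1
    rw [show (a ::ₘ M) = {a} + M from rfl, map_add, Multiset.toFinsupp_singleton]

lemma degree_toFinsupp (M : Multiset (Fin (k+1))) :
    (Multiset.toFinsupp M).degree = Multiset.card M := by
  rw [← Multiset.toFinsupp_sum_eq]
  simp [Finsupp.degree_apply, Finsupp.sum]

lemma monomial_eq_P (d : Fin (k+1) →₀ ℕ) :
    monomial d 1 = P (Finsupp.toMultiset d) := by
  rw [P_eq_monomial, Finsupp.toMultiset_toFinsupp]

lemma card_toMultiset_eq_degree (d : Fin (k+1) →₀ ℕ) :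
    Multiset.card (Finsupp.toMultiset d) = d.degree := by
  rw [← degree_toFinsupp, Finsupp.toMultiset_toFinsupp]

/-- the evaluation `X_a ↦ x^a` -/
noncomputable def Ψ (k : ℕ) : MvPolynomial (Fin (k+1)) ℂ →ₐ[ℂ] Polynomial ℂ :=
  aeval (fun a : Fin (k+1) => Polynomial.X ^ (a : ℕ))

lemma Ψ_vanish : ∀ p ∈ relIdeal (k+2), Ψ k p = 0 := by
  intro p hp
  have hle : relIdeal (k+2) ≤ RingHom.ker (Ψ k) := by
    rw [relIdeal, Ideal.span_le]
    rintro q ⟨a, b, c, d, h, rfl⟩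
    simp only [SetLike.mem_coe, RingHom.mem_ker, map_sub, map_mul]
    have key : ∀ (a b c d : Fin (k+1)), (a : ℕ) + (b : ℕ) = (c : ℕ) + (d : ℕ) →
        (Ψ k) (X a) * (Ψ k) (X b) - (Ψ k) (X c) * (Ψ k) (X d) = 0 := by
      intro a b c d h
      have ha : ∀ e : Fin (k+1), Ψ k (X e) = Polynomial.X ^ (e : ℕ) := fun e => aeval_X _ e
      rw [ha a, ha b, ha c, ha d, ← pow_add, ← pow_add, h, sub_self]
    exact key a b c d h
  exact hle hp

noncomputable def ψ (k : ℕ) :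
    (MvPolynomial (Fin (k+1)) ℂ ⧸ relIdeal (k+2)) →ₐ[ℂ] Polynomial ℂ :=
  Ideal.Quotient.liftₐ (relIdeal (k+2)) (Ψ k) Ψ_vanish

lemma Ψ_P (M : Multiset (Fin (k+1))) : Ψ k (P M) = Polynomial.X ^ (wsum M) := by
  induction M using Multiset.induction with
  | empty => simp
  | cons a M ih =>
    rw [P_cons, map_mul, ih, wsum_cons, pow_add]
    congr 1
    exact aeval_X _ a

lemma ψ_qmk_P (M : Multiset (Fin (k+1))) :
    ψ k (qmk k (P M)) = Polynomial.X ^ (wsum M) := by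
  have h : ψ k (qmk k (P M)) = Ψ k (P M) := Ideal.Quotient.liftₐ_apply _ _ _ _
  rw [h, Ψ_P]

end RelAux


open RelAux in
/-- the degree-`i` homogeneous component of the graded quotient
`ℂ[X_0,…,X_{N−2}]/I` (the image of the homogeneous polynomials of degree `i`)
has ℂ-dimension `i(N−2) + 1`.  (Equivalently, the quotient is isomorphic as a
graded algebra to `A^{(ℙ¹,N∞)}`.) -/
theorem quotient_component_finrank (N : ℕ) (hN : 2 ≤ N) (i : ℕ) :
    Module.finrank ℂ
      (Submodule.map (Ideal.Quotient.mkₐ ℂ (relIdeal N)).toLinearMap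
        (homogeneousSubmodule (Fin (N - 1)) ℂ i)) = i * (N - 2) + 1 := by
  obtain ⟨k, rfl⟩ : ∃ k, N = k + 2 := ⟨N - 2, by omega⟩
  show Module.finrank ℂ
      (Submodule.map (Ideal.Quotient.mkₐ ℂ (relIdeal (k+2))).toLinearMap
        (homogeneousSubmodule (Fin (k+1)) ℂ i)) = i * k + 1
  set v : Fin (i*k+1) → (MvPolynomial (Fin (k+1)) ℂ ⧸ relIdeal (k+2)) :=
    fun s => qmk k (P (canon k i (s : ℕ))) with hv
  have hspan : Submodule.map (Ideal.Quotient.mkₐ ℂ (relIdeal (k+2))).toLinearMap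
      (homogeneousSubmodule (Fin (k+1)) ℂ i) = Submodule.span ℂ (Set.range v) := by
    apply le_antisymm
    · rw [homogeneousSubmodule_eq_finsupp_supported, AddMonoidAlgebra.supported_eq_span_single,
        Submodule.map_span, Submodule.span_le]
      rintro x ⟨p, ⟨d, hd, rfl⟩, rfl⟩
      have hd' : d.degree = i := hd
      have hwle : wsum (Finsupp.toMultiset d) ≤ i * k := by
        have h1 := wsum_le (Finsupp.toMultiset d)
        rwa [card_toMultiset_eq_degree, hd'] at h1
      have : (Ideal.Quotient.mkₐ ℂ (relIdeal (k+2))).toLinearMap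
          ((fun d => AddMonoidAlgebra.single d (1:ℂ)) d) = v ⟨wsum (Finsupp.toMultiset d), by omega⟩ := by
        show qmk k (monomial d 1) = _
        rw [monomial_eq_P,
          qmk_P_canon i _ (by rw [card_toMultiset_eq_degree]; exact hd')]
      exact Set.mem_of_eq_of_mem this (Submodule.subset_span ⟨_, rfl⟩)
    · rw [Submodule.span_le]
      rintro x ⟨s, rfl⟩
      refine ⟨P (canon k i (s : ℕ)), ?_, rfl⟩
      rw [SetLike.mem_coe, mem_homogeneousSubmodule, P_eq_monomial]
      exact isHomogeneous_monomial 1 (by rw [degree_toFinsupp, card_canon])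
  have hli : LinearIndependent ℂ v := by
    apply LinearIndependent.of_comp (ψ k).toLinearMap
    have hc : (⇑(ψ k).toLinearMap ∘ v) =
        fun s : Fin (i*k+1) => (Polynomial.basisMonomials ℂ) (s : ℕ) := by
      funext s
      show ψ k (qmk k (P (canon k i (s : ℕ)))) = _
      rw [ψ_qmk_P, wsum_canon (by omega : (s : ℕ) ≤ i * k),
        Polynomial.coe_basisMonomials]
      exact Polynomial.X_pow_eq_monomial _
    rw [hc]
    exact (Polynomial.basisMonomials ℂ).linearIndependent.comp _ Fin.val_injective
  rw [hspan]
  exact (finrank_span_eq_card hli).trans (Fintype.card_fin _)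
end

section
/- Let B be an associative unital ring and let D, z ∈ B be invertible elements satisfying D·z − z·D = 1. For k ∈ ℕ set ω_k := D^{−1}·z^{k}. Then for all natural numbers a, b, c, d with a + b = c + d and b > d, one has ω_a·ω_b − ω_c·ω_d = (d − b)·(ω_a·ω_{b−d−1}·ω_d), where (d − b) acts as an integer scalar. (Applied to the ring of formal pseudodifferential operators over ℂ(z), with ω_k = ∂_z^{−1} z^k the lifts of the differentials z^k dz, these are the defining relations of the quantization of the cone of (ℙ¹, N∞): the quantum algebra is topologically presented by generators t_0,…,t_{N−2} and relations t_a t_b − t_c t_d = (d−b)·t_a t_{b−d−1} t_d for a+b = c+d, b > d.) -/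
section
variable {B : Type*} [Ring B]

lemma commL (E zz : B) (hz : zz * E = E * zz + E * E) :
    ∀ k : ℕ, zz ^ (k+1) * E = E * zz ^ (k+1) + ((k:ℤ)+1) • (E * zz ^ k * E) := by
  intro k
  induction k with
  | zero => simpa using hz
  | succ k ih =>
    have ih' : E * zz ^ (k+1) * E = E * (E * zz ^ (k+1)) + ((k:ℤ)+1) • (E * (E * zz ^ k * E)) := by
      rw [mul_assoc, ih, mul_add, mul_smul_comm]
    have ih'' : E * (E * zz ^ (k+1)) = E * (zz ^ (k+1) * E) - ((k:ℤ)+1) • (E * (E * (zz ^ k * E))) := by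
      rw [eq_sub_iff_add_eq, show E * (zz ^ (k+1) * E) = E * zz ^ (k+1) * E from (mul_assoc ..).symm,
        ih']; simp only [mul_assoc]
    have e1 : zz ^ (k+2) * E = zz * (zz ^ (k+1) * E) := by rw [← mul_assoc, ← pow_succ']
    rw [e1, ih, mul_add, mul_smul_comm, ← mul_assoc, ← mul_assoc, ← mul_assoc, hz]
    simp only [add_mul, smul_add, mul_assoc, ← pow_succ']
    rw [ih'']
    push_cast
    module

lemma shift (E zz : B) (hz : zz * E = E * zz + E * E) (a : ℕ) (w : B) :
    E * zz ^ (a+1) * (E * w) = E * zz ^ a * (E * (zz * w)) + E * zz ^ a * (E * (E * w)) := by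
  calc E * zz ^ (a+1) * (E * w) = E * zz ^ a * ((zz * E) * w) := by
        rw [pow_succ]; simp only [mul_assoc]
    _ = E * zz ^ a * ((E * zz + E * E) * w) := by rw [hz]
    _ = _ := by simp only [add_mul, mul_add, mul_assoc]

lemma star (E zz : B) (hz : zz * E = E * zz + E * E) (n d : ℕ) :
    E * (E * zz ^ (d+n+1)) + ((n:ℤ)+1) • (E * (E * (zz ^ n * (E * zz ^ d)))) =
      E * (zz ^ (n+1) * (E * zz ^ d)) := by
  have h1 : zz ^ (n+1) * (E * zz ^ d) = (E * zz ^ (n+1) + ((n:ℤ)+1) • (E * zz ^ n * E)) * zz ^ d := by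
    rw [← commL E zz hz n]; simp only [mul_assoc]
  rw [h1]
  have h2 : zz ^ (n+1) * zz ^ d = zz ^ (d+n+1) := by rw [← pow_add]; ring_nf
  simp only [add_mul, smul_mul_assoc, mul_add, mul_smul_comm, mul_assoc, h2]

lemma Q (E zz : B) (hz : zz * E = E * zz + E * E) :
    ∀ n a d : ℕ, E * zz ^ a * (E * zz ^ (d+n+1)) - E * zz ^ (a+n+1) * (E * zz ^ d)
      = (-((n:ℤ)+1)) • (E * zz ^ a * (E * zz ^ n) * (E * zz ^ d)) := by
  intro n
  induction n with
  | zero =>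
    intro a d
    rw [shift E zz hz a (zz ^ d)]
    have : zz * zz ^ d = zz ^ (d+0+1) := by rw [← pow_succ']
    rw [this]
    simp only [pow_zero, mul_one, mul_assoc]
    push_cast
    module
  | succ n ih =>
    intro a d
    have t1 := by
      have := ih (a+1) d
      exact this
    have t2 : E * zz ^ a * (E * zz ^ (d+n+1+1)) - E * zz ^ (a+1) * (E * zz ^ (d+n+1))
        = -(1:ℤ) • (E * zz ^ a * (E * (E * zz ^ (d+n+1)))) := by
      rw [shift E zz hz a (zz ^ (d+n+1))]
      have : zz * zz ^ (d+n+1) = zz ^ (d+n+1+1) := by rw [← pow_succ']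
      rw [this]
      module
    have hs := star E zz hz n d
    -- combine
    have comb : E * zz ^ a * (E * zz ^ (d+(n+1)+1)) - E * zz ^ (a+(n+1)+1) * (E * zz ^ d)
        = (E * zz ^ a * (E * zz ^ (d+n+1+1)) - E * zz ^ (a+1) * (E * zz ^ (d+n+1)))
          + (E * zz ^ (a+1) * (E * zz ^ (d+n+1)) - E * zz ^ (a+1+n+1) * (E * zz ^ d)) := by
      have e1 : d+(n+1)+1 = d+n+1+1 := by ring
      have e2 : a+(n+1)+1 = a+1+n+1 := by ring
      rw [e1, e2]; abel
    rw [comb, t2, t1]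
    -- now express E*zz^(a+1)*(E*zz^n)*(E*zz^d) via shift
    have t3 : E * zz ^ (a+1) * (E * zz ^ n) * (E * zz ^ d)
        = E * zz ^ a * (E * zz ^ (n+1)) * (E * zz ^ d)
          + E * zz ^ a * (E * (E * zz ^ n)) * (E * zz ^ d) := by
      rw [shift E zz hz a (zz ^ n), add_mul]
      have : zz * zz ^ n = zz ^ (n+1) := by rw [← pow_succ']
      rw [this]
    rw [t3]
    -- now use hs, after massaging: multiply hs by (E*zz^a) on left... 
    have hs' : E * zz ^ a * (E * (E * zz ^ (d+n+1)))
          + ((n:ℤ)+1) • (E * zz ^ a * (E * (E * zz ^ n)) * (E * zz ^ d))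
        = E * zz ^ a * (E * zz ^ (n+1)) * (E * zz ^ d) := by
      have := congrArg (fun x => E * zz ^ a * x) hs
      simpa only [mul_add, mul_smul_comm, mul_assoc] using this
    rw [← hs']
    push_cast
    module

end

/-- in an associative unital ring `B` with invertible elements `D`, `z`
satisfying `D·z − z·D = 1`, the elements `ω_k := D⁻¹·z^k` satisfy, for all natural
numbers `a, b, c, d` with `a + b = c + d` and `b > d`,
`ω_a·ω_b − ω_c·ω_d = (d − b)·(ω_a·ω_{b−d−1}·ω_d)`.
(These are the defining relations of the quantization of the cone of `(ℙ¹, N∞)`.) -/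
theorem quantum_relations {B : Type*} [Ring B] (D z : Bˣ)
    (h : (D : B) * z - z * D = 1) (a b c d : ℕ)
    (habcd : a + b = c + d) (hbd : d < b) :
    (((D⁻¹ : Bˣ) : B) * (z : B) ^ a) * (((D⁻¹ : Bˣ) : B) * (z : B) ^ b) -
      (((D⁻¹ : Bˣ) : B) * (z : B) ^ c) * (((D⁻¹ : Bˣ) : B) * (z : B) ^ d) =
    ((d : ℤ) - (b : ℤ)) •
      ((((D⁻¹ : Bˣ) : B) * (z : B) ^ a) * (((D⁻¹ : Bˣ) : B) * (z : B) ^ (b - d - 1)) *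
        (((D⁻¹ : Bˣ) : B) * (z : B) ^ d)) := by
  set E : B := ((D⁻¹ : Bˣ) : B) with hE
  have hz : (z : B) * E = E * z + E * E := by
    have h1 : (z : B) * (D : B) = (D : B) * z - 1 := by rw [← h]; abel
    have hED : E * (D : B) = 1 := by rw [hE]; exact Units.inv_mul D
    have hDE : (D : B) * E = 1 := by rw [hE]; exact Units.mul_inv D
    calc (z : B) * E = (E * D) * z * E := by rw [hED, one_mul]
      _ = E * ((z : B) * D + 1) * E := by
          rw [h1]; noncomm_ring
      _ = E * z * (D * E) + E * E := by noncomm_ring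
      _ = E * z + E * E := by rw [hDE, mul_one]
  obtain ⟨n, hn⟩ : ∃ n : ℕ, b = d + n + 1 := ⟨b - d - 1, by omega⟩
  have hc : c = a + n + 1 := by omega
  have hb1 : b - d - 1 = n := by omega
  subst hn hc
  rw [hb1]
  have := Q E (z : B) hz n a d
  rw [this]
  congr 1
  push_cast
  ring
end
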